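/- arXiv:0707.1095 — 6 statements merged into one kernel-verified Lean document; each statement's English description precedes it below -/
import Mathlib

section
/- Let D be an acyclic digraph with a unique vertex of in-degree zero. Then either D has an out-branching with at least k leaves, or the pathwidth of the underlying undirected graph of D is at most 4k. -/
open Relation

/-- `T` is an out-branching (spanning out-tree) of the digraph `A` rooted at `r`. -/
def IsOutBranching {V : Type*} (A : V → V → Prop) (r : V) (T : V → V → Prop) : Prop :=
  (∀ u v, T u v → A u v) ∧
  (∀ u, ¬ T u r) ∧
  (∀ v, v ≠ r → ∃! u, T u v) ∧
  (∀ v, Relation.ReflTransGen T r v)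

/-- Number of leaves (out-degree zero vertices) of a spanning tree relation `T`. -/
noncomputable def leavesCount {V : Type*} (T : V → V → Prop) : ℕ :=
  {v : V | ∀ u, ¬ T v u}.ncard

/-- `T` is an out-tree of digraph `A` on vertex set `S`, rooted at `r`. -/
def IsOutTree {V : Type*} (A : V → V → Prop) (S : Set V) (r : V) (T : V → V → Prop) : Prop :=
  r ∈ S ∧
  (∀ u v, T u v → A u v ∧ u ∈ S ∧ v ∈ S) ∧
  (∀ u, ¬ T u r) ∧
  (∀ v ∈ S, v ≠ r → ∃! u, T u v) ∧
  (∀ v ∈ S, Relation.ReflTransGen T r v)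

/-- Number of leaves of an out-tree with vertex set `S` and arc relation `T`. -/
noncomputable def treeLeaves {V : Type*} (S : Set V) (T : V → V → Prop) : ℕ :=
  {v : V | v ∈ S ∧ ∀ u, ¬ T v u}.ncard

/-- A rooted (directed) tree on the whole vertex type. -/
def IsRootedTree {V : Type*} (T : V → V → Prop) (r : V) : Prop :=
  (∀ u, ¬ T u r) ∧
  (∀ v, v ≠ r → ∃! u, T u v) ∧
  (∀ v, Relation.ReflTransGen T r v)

/-- Out-degree of a vertex in a digraph/tree relation. -/
noncomputable def outDeg {V : Type*} (T : V → V → Prop) (v : V) : ℕ :=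
  {u : V | T v u}.ncard

/-- The underlying undirected simple graph of a digraph. -/
def UN {V : Type*} (A : V → V → Prop) : SimpleGraph V where
  Adj u v := u ≠ v ∧ (A u v ∨ A v u)
  symm := ⟨fun u v h => ⟨Ne.symm h.1, h.2.symm⟩⟩
  loopless := ⟨fun v h => h.1 rfl⟩

/-- The pathwidth of `G` is at most `w`: there is a path decomposition of width `≤ w`. -/
def pwLE {V : Type*} (G : SimpleGraph V) (w : ℕ) : Prop :=
  ∃ (s : ℕ) (X : Fin s → Finset V),
    (∀ v, ∃ i, v ∈ X i) ∧
    (∀ u v, G.Adj u v → ∃ i, u ∈ X i ∧ v ∈ X i) ∧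
    (∀ i j k : Fin s, i ≤ j → j ≤ k → ∀ v, v ∈ X i → v ∈ X k → v ∈ X j) ∧
    (∀ i, (X i).card ≤ w + 1)

/-- The strong component of the vertex `v` in digraph `A`. -/
def strongComp {V : Type*} (A : V → V → Prop) (v : V) : Set V :=
  {u : V | Relation.ReflTransGen A u v ∧ Relation.ReflTransGen A v u}

/-- Maximum number of leaves over all out-trees of `A` (ℓ(D)). -/
noncomputable def maxLeafOT {V : Type*} (A : V → V → Prop) : ℕ :=
  sSup {l : ℕ | ∃ (S : Set V) (r : V) (T : V → V → Prop), IsOutTree A S r T ∧ treeLeaves S T = l}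

/-- Maximum number of leaves over all out-branchings of `A` (ℓ_s(D)), `0` if none exists. -/
noncomputable def maxLeafOB {V : Type*} (A : V → V → Prop) : ℕ :=
  sSup {l : ℕ | ∃ (r : V) (T : V → V → Prop), IsOutBranching A r T ∧ leavesCount T = l}

/-- `T` is a 1-arc-exchange optimal out-branching of `A` rooted at `r`. -/
def OneAEOptimal {V : Type*} (A : V → V → Prop) (r : V) (T : V → V → Prop) : Prop :=
  IsOutBranching A r T ∧
  ∀ f x : V × V, T f.1 f.2 → A x.1 x.2 → ¬ T x.1 x.2 →
    IsOutBranching A r (fun a b => (T a b ∧ (a, b) ≠ f) ∨ (a, b) = x) →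
    leavesCount (fun a b => (T a b ∧ (a, b) ≠ f) ∨ (a, b) = x) ≤ leavesCount T

/-- Vertex separation of `G` is at most `k`, witnessed by some linear ordering. -/
def vsLE {V : Type*} [Fintype V] (G : SimpleGraph V) (k : ℕ) : Prop :=
  ∃ σ : Fin (Fintype.card V) ≃ V,
    ∀ j : Fin (Fintype.card V),
      {i : Fin (Fintype.card V) | i ≤ j ∧ ∃ i', j < i' ∧ G.Adj (σ i) (σ i')}.ncard ≤ k



section Basic
variable {V : Type*}

lemma wf_of_acyclic [Finite V] (A : V → V → Prop) (h : ∀ v, ¬ TransGen A v v) :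
    WellFounded A := by
  have : IsIrrefl V (TransGen A) := ⟨h⟩
  have wf : WellFounded (TransGen A) := Finite.wellFounded_of_trans_of_irrefl _
  exact Subrelation.wf (fun hab => TransGen.single hab) wf

end Basic

section Basic
variable {V : Type*}

lemma exists_branching [Finite V] (A : V → V → Prop) (hacyc : ∀ v, ¬ TransGen A v v)
    (r : V) (hr : ∀ u : V, ¬ A u r) (hu : ∀ v : V, (∀ u : V, ¬ A u v) → v = r) :
    ∃ T : V → V → Prop, IsOutBranching A r T := by
  classical
  have pfn : ∀ v : V, v ≠ r → ∃ u, A u v := by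
    intro v hv
    by_contra hc
    push_neg at hc
    exact hv (hu v hc)
  set par : V → V := fun v => if h : v = r then v else Classical.choose (pfn v h) with hpar
  have hparA : ∀ v (h : v ≠ r), A (par v) v := by
    intro v h
    simpa [hpar, dif_neg h] using Classical.choose_spec (pfn v h)
  refine ⟨fun u v => v ≠ r ∧ u = par v, ?_, ?_, ?_, ?_⟩
  · rintro u v ⟨h1, rfl⟩; exact hparA v h1
  · rintro u ⟨h1, -⟩; exact h1 rfl
  · intro v hv
    exact ⟨par v, ⟨hv, rfl⟩, by rintro u ⟨-, rfl⟩; rfl⟩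
  · have wf := wf_of_acyclic A hacyc
    intro v
    induction v using WellFounded.induction wf with
    | _ v ih =>
      by_cases h : v = r
      · subst h; exact ReflTransGen.refl
      · exact (ih (par v) (hparA v h)).tail ⟨h, rfl⟩

lemma exists_max_branching [Finite V] (A : V → V → Prop) (r₀ : V) (T₀ : V → V → Prop)
    (h₀ : IsOutBranching A r₀ T₀) :
    ∃ (ρ : V) (T : V → V → Prop), IsOutBranching A ρ T ∧
      ∀ (ρ' : V) (T' : V → V → Prop), IsOutBranching A ρ' T' →
        leavesCount T' ≤ leavesCount T := by
  classical
  cases nonempty_fintype V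
  set s : Set ℕ := {l | ∃ (ρ : V) (T : V → V → Prop), IsOutBranching A ρ T ∧ leavesCount T = l}
  have hne : s.Nonempty := ⟨leavesCount T₀, r₀, T₀, h₀, rfl⟩
  have hbdd : BddAbove s := by
    refine ⟨Fintype.card V, ?_⟩
    rintro l ⟨ρ, T, -, rfl⟩
    exact le_trans (Set.ncard_le_ncard (Set.subset_univ _) Set.finite_univ)
      (by simp [Set.ncard_univ])
  obtain ⟨ρ, T, hT, hl⟩ := Nat.sSup_mem hne hbdd
  exact ⟨ρ, T, hT, fun ρ' T' hT' => hl ▸ le_csSup hbdd ⟨ρ', T', hT', rfl⟩⟩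

end Basic

section Basic
variable {V : Type*}

/-- Structural property of a maximum-leaf out-branching in a DAG:
arcs into a vertex whose tree-parent has out-degree 1 come from leaves. -/
lemma star_lemma [Finite V] (A : V → V → Prop) (hacyc : ∀ v, ¬ TransGen A v v)
    (ρ : V) (T : V → V → Prop) (hT : IsOutBranching A ρ T)
    (hmax : ∀ (ρ' : V) (T' : V → V → Prop), IsOutBranching A ρ' T' →
      leavesCount T' ≤ leavesCount T) :
    ∀ u v p, A u v → ¬ T u v → T p v → outDeg T p = 1 → ∀ w, ¬ T u w := by
  classical
  obtain ⟨hTA, hTr, hTuniq, hTreach⟩ := hT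
  intro u v p hAuv hnTuv hpv hdegp w huw
  have hvρ : v ≠ ρ := fun h => hTr p (h ▸ hpv)
  set T' : V → V → Prop := fun a b => (T a b ∧ (a, b) ≠ (p, v)) ∨ (a, b) = (u, v) with hT'def
  -- v does not T-reach u
  have hmono : ∀ {a b}, ReflTransGen T a b → ReflTransGen A a b :=
    fun h => ReflTransGen.mono hTA _ _ h
  have noreach_vu : ¬ ReflTransGen T v u := fun h =>
    hacyc v (TransGen.tail' (hmono h) hAuv)
  have helper1 : ∀ x, ReflTransGen T ρ x → ¬ ReflTransGen T v x → ReflTransGen T' ρ x := by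
    intro x hx
    induction hx with
    | refl => intro _; exact ReflTransGen.refl
    | @tail b c h1 h2 ih =>
      intro hnv
      have hb : ¬ ReflTransGen T v b := fun h => hnv (h.tail h2)
      have hcv : c ≠ v := fun h => hnv (h ▸ ReflTransGen.refl)
      exact (ih hb).tail (Or.inl ⟨h2, by simp [hcv]⟩)
  have reach_u' : ReflTransGen T' ρ u := helper1 u (hTreach u) noreach_vu
  have reach_v' : ReflTransGen T' ρ v := reach_u'.tail (Or.inr rfl)
  have helper2 : ∀ x, ReflTransGen T v x → ReflTransGen T' v x := by
    intro x hx
    induction hx with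
    | refl => exact ReflTransGen.refl
    | @tail b c h1 h2 ih =>
      have hcv : c ≠ v := fun hcv' =>
        hacyc v (TransGen.mono hTA _ _ (TransGen.tail' h1 (hcv' ▸ h2)))
      exact ih.tail (Or.inl ⟨h2, by simp [hcv]⟩)
  have reach' : ∀ x, ReflTransGen T' ρ x := by
    intro x
    by_cases h : ReflTransGen T v x
    · exact reach_v'.trans (helper2 x h)
    · exact helper1 x (hTreach x) h
  have hB' : IsOutBranching A ρ T' := by
    refine ⟨?_, ?_, ?_, reach'⟩
    · rintro a b (⟨h, -⟩ | h)
      · exact hTA a b h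
      · rw [Prod.mk.injEq] at h; rw [h.1, h.2]; exact hAuv
    · rintro a (⟨h, -⟩ | h)
      · exact hTr a h
      · rw [Prod.mk.injEq] at h; exact hvρ h.2.symm
    · intro x hx
      by_cases hxv : x = v
      · refine ⟨u, Or.inr (by rw [hxv]), ?_⟩
        rintro a (⟨h, hne⟩ | he)
        · have h' : T a v := hxv ▸ h
          have hap : a = p := (hTuniq v hvρ).unique h' hpv
          exact absurd (by rw [hap, hxv]) hne
        · rw [Prod.mk.injEq] at he; exact he.1
      · obtain ⟨q, hq, hquniq⟩ := hTuniq x hx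
        refine ⟨q, Or.inl ⟨hq, by simp [hxv]⟩, ?_⟩
        rintro a (⟨h, -⟩ | he)
        · exact hquniq a h
        · rw [Prod.mk.injEq] at he; exact absurd he.2 hxv
  -- leaves strictly increase
  have hchild : ∀ z, T p z → z = v := by
    intro z hz
    obtain ⟨a, ha⟩ := Set.ncard_eq_one.mp hdegp
    have h1 : z ∈ {y | T p y} := hz
    have h2 : v ∈ {y | T p y} := hpv
    rw [ha] at h1 h2
    rw [Set.mem_singleton_iff] at h1 h2
    rw [h1, h2]
  have hsub : insert p {x | ∀ z, ¬ T x z} ⊆ {x | ∀ z, ¬ T' x z} := by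
    rintro x (rfl | hx)
    · rintro z (⟨h, hne⟩ | he)
      · exact hne (by rw [hchild z h])
      · rw [Prod.mk.injEq] at he; exact hnTuv (he.1 ▸ hpv)
    · rintro z (⟨h, -⟩ | he)
      · exact hx z h
      · rw [Prod.mk.injEq] at he; exact hx w (by rw [he.1]; exact huw)
  have hpnot : p ∉ {x | ∀ z, ¬ T x z} := fun h => h v hpv
  have hlt : leavesCount T < leavesCount T' := by
    have hfin : ({x | ∀ z, ¬ T x z} : Set V).Finite := Set.toFinite _
    calc leavesCount T < (insert p {x | ∀ z, ¬ T x z}).ncard := by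
          rw [Set.ncard_insert_of_notMem hpnot hfin]; exact Nat.lt_succ_self _
      _ ≤ leavesCount T' := Set.ncard_le_ncard hsub (Set.toFinite _)
  exact absurd (hmax ρ T' hB') (not_le.mpr hlt)

end Basic

section Counting
variable {V : Type*} [Fintype V] [DecidableEq V]

lemma counting (T : V → V → Prop) [DecidableRel T] (ρ : V)
    (hTr : ∀ u, ¬ T u ρ) (hTuniq : ∀ v, v ≠ ρ → ∃! u, T u v)
    (dg : V → ℕ) (hdg : dg = fun v => (Finset.univ.filter fun u => T v u).card) :
    (Finset.univ.filter fun v : V => 2 ≤ dg v).card + 1 ≤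
      (Finset.univ.filter fun v : V => dg v = 0).card ∧
    (Finset.univ.filter fun v : V =>
        ∃ b, T b v ∧ 2 ≤ dg b).card + 1 ≤
      (Finset.univ.filter fun v : V => dg v = 0).card +
      (Finset.univ.filter fun v : V => 2 ≤ dg v).card := by
  subst hdg
  set deg : V → ℕ := fun v => (Finset.univ.filter fun u => T v u).card with hdeg
  set Tarcs : Finset (V × V) := Finset.univ.filter (fun p => T p.1 p.2) with hTarcs
  have hn : 1 ≤ Fintype.card V := Fintype.card_pos_iff.mpr ⟨ρ⟩
  -- arcs count
  have harcs : Tarcs.card = Fintype.card V - 1 := by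
    rw [← Finset.card_univ, ← Finset.card_erase_of_mem (Finset.mem_univ ρ)]
    apply Finset.card_bij (fun p _ => p.2)
    · intro p hp
      rw [hTarcs, Finset.mem_filter] at hp
      exact Finset.mem_erase.mpr ⟨fun h => hTr p.1 (h ▸ hp.2), Finset.mem_univ _⟩
    · intro p hp q hq hpq
      rw [hTarcs, Finset.mem_filter] at hp hq
      have hne : p.2 ≠ ρ := fun h => hTr p.1 (h ▸ hp.2)
      have := (hTuniq p.2 hne).unique hp.2 (by rw [hpq]; exact hq.2)
      exact Prod.ext this hpq
    · intro w hw
      rw [Finset.mem_erase] at hw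
      obtain ⟨q, hq, -⟩ := hTuniq w hw.1
      exact ⟨(q, w), by rw [hTarcs]; simp [hq], rfl⟩
  -- arcs = sum of degrees
  have hsum : Tarcs.card = ∑ v : V, deg v := by
    have h1 := Finset.card_eq_sum_card_fiberwise (s := Tarcs) (t := Finset.univ)
      (f := fun p : V × V => p.1) (fun p _ => Finset.mem_univ _)
    rw [h1]
    apply Finset.sum_congr rfl
    intro v _
    apply Finset.card_bij (fun p _ => p.2)
    · intro p hp
      simp only [hTarcs, Finset.mem_filter, Finset.mem_univ, true_and] at hp ⊢
      rw [← hp.2]; exact hp.1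
    · intro p hp q hq hpq
      simp only [hTarcs, Finset.mem_filter, Finset.mem_univ, true_and] at hp hq
      exact Prod.ext (hp.2.trans hq.2.symm) hpq
    · intro u hu
      simp only [Finset.mem_filter, Finset.mem_univ, true_and] at hu
      exact ⟨(v, u), by simp [hTarcs, hu], rfl⟩
  have hpt : ∀ v : V, deg v + (if deg v = 0 then 1 else 0)
      = 1 + (if 2 ≤ deg v then deg v - 1 else 0) := by
    intro v
    rcases Nat.lt_or_ge (deg v) 2 with h | h
    · interval_cases h' : deg v <;> simp
    · rw [if_neg (by omega), if_pos h]; omega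
  have hkey : (∑ v : V, deg v) + (Finset.univ.filter fun v : V => deg v = 0).card
      = Fintype.card V + ∑ v ∈ Finset.univ.filter (fun v : V => 2 ≤ deg v), (deg v - 1) := by
    calc (∑ v : V, deg v) + (Finset.univ.filter fun v : V => deg v = 0).card
        = ∑ v : V, (deg v + if deg v = 0 then 1 else 0) := by
          rw [Finset.sum_add_distrib, Finset.card_filter]
      _ = ∑ v : V, (1 + if 2 ≤ deg v then deg v - 1 else 0) :=
          Finset.sum_congr rfl (fun v _ => hpt v)
      _ = Fintype.card V + ∑ v ∈ Finset.univ.filter (fun v : V => 2 ≤ deg v), (deg v - 1) := by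
          rw [Finset.sum_add_distrib, Finset.sum_filter]
          simp
  set E : ℕ := ∑ v ∈ Finset.univ.filter (fun v : V => 2 ≤ deg v), (deg v - 1) with hE
  set B : ℕ := (Finset.univ.filter fun v : V => 2 ≤ deg v).card with hB
  set L : ℕ := (Finset.univ.filter fun v : V => deg v = 0).card with hL
  have hBE : B ≤ E := by
    have h := Finset.card_nsmul_le_sum (Finset.univ.filter fun v : V => 2 ≤ deg v)
      (fun v => deg v - 1) 1 (fun x hx => by rw [Finset.mem_filter] at hx; show 1 ≤ deg x - 1; omega)
    simpa using h
  have hLE : L = 1 + E := by omega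
  have hSB : ∑ v ∈ Finset.univ.filter (fun v : V => 2 ≤ deg v), deg v = E + B := by
    calc ∑ v ∈ Finset.univ.filter (fun v : V => 2 ≤ deg v), deg v
        = ∑ v ∈ Finset.univ.filter (fun v : V => 2 ≤ deg v), ((deg v - 1) + 1) :=
          Finset.sum_congr rfl (fun v hv => by rw [Finset.mem_filter] at hv; omega)
      _ = E + B := by
          rw [Finset.sum_add_distrib, Finset.sum_const, smul_eq_mul, mul_one]
  have hCf : (Finset.univ.filter fun v : V => ∃ b, T b v ∧ 2 ≤ deg b).card
      ≤ ∑ v ∈ Finset.univ.filter (fun v : V => 2 ≤ deg v), deg v := by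
    refine le_trans (Finset.card_le_card ?_) (Finset.card_biUnion_le
      (s := Finset.univ.filter (fun v : V => 2 ≤ deg v))
      (t := fun b => Finset.univ.filter (fun u => T b u)))
    intro v hv
    rw [Finset.mem_filter] at hv
    obtain ⟨-, b, hbv, hb⟩ := hv
    rw [Finset.mem_biUnion]
    exact ⟨b, by simp [hb], by simp [hbv]⟩
  refine ⟨by omega, ?_⟩
  have hrfl : (Finset.univ.filter fun v : V =>
      ∃ b, T b v ∧ 2 ≤ (Finset.univ.filter fun u => T b u).card)
      = (Finset.univ.filter fun v : V => ∃ b, T b v ∧ 2 ≤ deg b) := rfl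
  rw [hrfl]
  omega

end Counting

section Assemble
variable {V : Type*}

lemma pw_small [Fintype V] (A : V → V → Prop) (hacyc : ∀ v, ¬ TransGen A v v) (k : ℕ)
    (ρ : V) (T : V → V → Prop) (hT : IsOutBranching A ρ T)
    (hstar : ∀ u v p, A u v → ¬ T u v → T p v → outDeg T p = 1 → ∀ w, ¬ T u w)
    (hleaves : leavesCount T < k) : pwLE (UN A) (4 * k) := by
  classical
  obtain ⟨hTA, hTr, hTuniq, hTreach⟩ := hT
  have wfA : WellFounded A := wf_of_acyclic A hacyc
  set deg : V → ℕ := fun v => (Finset.univ.filter fun u => T v u).card with hdeg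
  have hdegeq : ∀ v, outDeg T v = deg v := by
    intro v
    rw [outDeg, Set.ncard_eq_toFinset_card', Set.toFinset_setOf]
  have hdeg0 : ∀ v, (deg v = 0 ↔ ∀ u, ¬ T v u) := by
    intro v
    rw [hdeg, Finset.card_eq_zero, Finset.filter_eq_empty_iff]
    simp
  -- counting
  obtain ⟨hcnt1, hcnt2⟩ := counting T ρ hTr hTuniq deg hdeg
  have hLk : (Finset.univ.filter fun v : V => deg v = 0).card < k := by
    have : leavesCount T = (Finset.univ.filter fun v : V => deg v = 0).card := by
      rw [leavesCount, Set.ncard_eq_toFinset_card', Set.toFinset_setOf]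
      congr 1
      exact Finset.filter_congr (fun v _ => by rw [hdeg0])
    omega
  -- the static set
  set S' : Finset V := {ρ} ∪ (Finset.univ.filter fun v : V => deg v = 0)
      ∪ (Finset.univ.filter fun v : V => 2 ≤ deg v)
      ∪ (Finset.univ.filter fun v : V => ∃ b, T b v ∧ 2 ≤ deg b) with hS'
  have hS'card : S'.card + 2 ≤ 4 * k + 1 := by
    have h1 := Finset.card_union_le ({ρ} ∪ (Finset.univ.filter fun v : V => deg v = 0)
      ∪ (Finset.univ.filter fun v : V => 2 ≤ deg v))
      (Finset.univ.filter fun v : V => ∃ b, T b v ∧ 2 ≤ deg b)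
    have h2 := Finset.card_union_le ({ρ} ∪ (Finset.univ.filter fun v : V => deg v = 0))
      (Finset.univ.filter fun v : V => 2 ≤ deg v)
    have h3 := Finset.card_union_le ({ρ} : Finset V)
      (Finset.univ.filter fun v : V => deg v = 0)
    have h4 : ({ρ} : Finset V).card = 1 := Finset.card_singleton ρ
    rw [hS']
    omega
  have hρS' : ρ ∈ S' := by
    rw [hS']
    simp [Finset.mem_union]
  have hleafS' : ∀ v, deg v = 0 → v ∈ S' := by
    intro v hv
    rw [hS']
    simp [Finset.mem_union, hv]
  -- parent function
  have pex : ∀ v, v ≠ ρ → ∃ u, T u v := fun v hv => (hTuniq v hv).exists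
  set tpar : V → V := fun v => if h : v = ρ then ρ else Classical.choose (pex v h) with htpardef
  have htpar : ∀ v, v ≠ ρ → T (tpar v) v := by
    intro v h
    simp only [htpardef, dif_neg h]
    exact Classical.choose_spec (pex v h)
  have htpar_uniq : ∀ v, v ≠ ρ → ∀ u, T u v → u = tpar v := by
    intro v h u hu
    exact (hTuniq v h).unique hu (htpar v h)
  -- facts about non-S' vertices ("middle" vertices)
  have hmidne : ∀ v : V, v ∉ S' → v ≠ ρ := fun v hv h => hv (h ▸ hρS')
  have hmidfacts : ∀ v : V, v ∉ S' →
      deg v = 1 ∧ deg (tpar v) = 1 := by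
    intro v hv
    have hvρ : v ≠ ρ := hmidne v hv
    rw [hS'] at hv
    simp only [Finset.mem_union, Finset.mem_singleton, Finset.mem_filter, Finset.mem_univ,
      true_and, not_or] at hv
    obtain ⟨⟨⟨-, h0⟩, h2⟩, hC⟩ := hv
    push_neg at hC
    have hp := htpar v hvρ
    have hp1 : 1 ≤ deg (tpar v) :=
      Finset.card_pos.mpr ⟨v, by simp [hp]⟩
    have hp2 : deg (tpar v) < 2 := hC (tpar v) hp
    have hv1 : 1 ≤ deg v := by
      rcases Nat.eq_zero_or_pos (deg v) with h | h
      · exact absurd h h0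
      · exact h
    have hv2 : deg v < 2 := lt_of_not_ge h2
    omega
  have huniqchild : ∀ p z z', deg p = 1 → T p z → T p z' → z = z' := by
    intro p z z' h1 hz hz'
    obtain ⟨a, ha⟩ := Finset.card_eq_one.mp h1
    have m1 : z ∈ Finset.univ.filter fun u => T p u := by simp [hz]
    have m2 : z' ∈ Finset.univ.filter fun u => T p u := by simp [hz']
    rw [ha, Finset.mem_singleton] at m1 m2
    rw [m1, m2]
  -- top of chain and depth along chain
  set F : ∀ v : V, (∀ u, A u v → V) → V := fun v IH =>
    if h : v ∉ S' ∧ tpar v ∉ S' then IH (tpar v) (hTA _ _ (htpar v (hmidne v h.1))) else v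
    with hF
  set top : V → V := wfA.fix F with htopdef
  have htop_eq : ∀ v, top v = if v ∉ S' ∧ tpar v ∉ S' then top (tpar v) else v := by
    intro v
    rw [htopdef, WellFounded.fix_eq]
    simp only [hF]
    by_cases h : v ∉ S' ∧ tpar v ∉ S'
    · rw [dif_pos h, if_pos h]
    · rw [dif_neg h, if_neg h]
  set G : ∀ v : V, (∀ u, A u v → ℕ) → ℕ := fun v IH =>
    if h : v ∉ S' ∧ tpar v ∉ S' then IH (tpar v) (hTA _ _ (htpar v (hmidne v h.1))) + 1 else 0
    with hG
  set dpt : V → ℕ := wfA.fix G with hdptdef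
  have hdpt_eq : ∀ v, dpt v = if v ∉ S' ∧ tpar v ∉ S' then dpt (tpar v) + 1 else 0 := by
    intro v
    rw [hdptdef, WellFounded.fix_eq]
    simp only [hG]
    by_cases h : v ∉ S' ∧ tpar v ∉ S'
    · rw [dif_pos h, if_pos h]
    · rw [dif_neg h, if_neg h]
  -- injectivity of (top, dpt) on middle vertices
  have hinj : ∀ n : ℕ, ∀ v w : V, v ∉ S' → w ∉ S' → dpt v = n → dpt w = n →
      top v = top w → v = w := by
    intro n
    induction n with
    | zero =>
      intro v w hv hw hdv hdw htops
      have hv' : ¬ (v ∉ S' ∧ tpar v ∉ S') := by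
        intro h
        rw [hdpt_eq v, if_pos h] at hdv
        omega
      have hw' : ¬ (w ∉ S' ∧ tpar w ∉ S') := by
        intro h
        rw [hdpt_eq w, if_pos h] at hdw
        omega
      have h1 : top v = v := by rw [htop_eq v, if_neg hv']
      have h2 : top w = w := by rw [htop_eq w, if_neg hw']
      rw [← h1, ← h2, htops]
    | succ n ih =>
      intro v w hv hw hdv hdw htops
      have hv' : v ∉ S' ∧ tpar v ∉ S' := by
        by_contra h
        rw [hdpt_eq v, if_neg h] at hdv
        omega
      have hw' : w ∉ S' ∧ tpar w ∉ S' := by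
        by_contra h
        rw [hdpt_eq w, if_neg h] at hdw
        omega
      have hdv' : dpt (tpar v) = n := by
        rw [hdpt_eq v, if_pos hv'] at hdv
        omega
      have hdw' : dpt (tpar w) = n := by
        rw [hdpt_eq w, if_pos hw'] at hdw
        omega
      have htv : top (tpar v) = top v := by rw [htop_eq v, if_pos hv']
      have htw : top (tpar w) = top w := by rw [htop_eq w, if_pos hw']
      have hq : tpar v = tpar w :=
        ih (tpar v) (tpar w) hv'.2 hw'.2 hdv' hdw' (by rw [htv, htw, htops])
      have hdq : deg (tpar v) = 1 := (hmidfacts v hv).2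
      exact huniqchild (tpar v) v w hdq (htpar v (hmidne v hv)) (hq ▸ htpar w (hmidne w hw))
  -- linear order on middle vertices
  set e : V ≃ Fin (Fintype.card V) := Fintype.equivFin V with he
  set key : {v : V // v ∉ S'} → ℕ ×ₗ ℕ :=
    fun m => toLex ((e (top m.1)).1, dpt m.1) with hkey
  have hkeyiff : ∀ a b : {v : V // v ∉ S'}, key a < key b ↔
      ((e (top a.1)).1 < (e (top b.1)).1 ∨
        ((e (top a.1)).1 = (e (top b.1)).1 ∧ dpt a.1 < dpt b.1)) := by
    intro a b
    rw [hkey]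
    exact Prod.Lex.lt_iff
  have hkeyinj : Function.Injective key := by
    intro a b hab
    rw [hkey] at hab
    have h0 : ((e (top a.1)).1, dpt a.1) = ((e (top b.1)).1, dpt b.1) := congrArg ofLex hab
    rw [Prod.mk.injEq] at h0
    have htops : top a.1 = top b.1 := e.injective (Fin.val_injective h0.1)
    exact Subtype.ext (hinj (dpt b.1) a.1 b.1 a.2 b.2 h0.2 rfl htops)
  letI : LinearOrder {v : V // v ∉ S'} := LinearOrder.lift' key hkeyinj
  have hlt_iff : ∀ a b : {v : V // v ∉ S'}, a < b ↔ key a < key b := by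
    intro a b
    rw [lt_iff_le_not_ge, lt_iff_le_not_ge]
    exact Iff.rfl
  set t := Fintype.card {v : V // v ∉ S'} with ht
  set σ : Fin t ≃o {v : V // v ∉ S'} := monoEquivOfFin _ rfl with hσ
  -- consecutiveness of middle tree arcs
  have hconsec : ∀ a b : {v : V // v ∉ S'}, T a.1 b.1 →
      (σ.symm b : ℕ) = (σ.symm a : ℕ) + 1 := by
    intro a b hab
    have hbρ : b.1 ≠ ρ := hmidne b.1 b.2
    have hpa : tpar b.1 = a.1 := (htpar_uniq b.1 hbρ a.1 hab).symm
    have hcond : b.1 ∉ S' ∧ tpar b.1 ∉ S' := ⟨b.2, by rw [hpa]; exact a.2⟩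
    have htopab : top b.1 = top a.1 := by rw [htop_eq b.1, if_pos hcond, hpa]
    have hdab : dpt b.1 = dpt a.1 + 1 := by rw [hdpt_eq b.1, if_pos hcond, hpa]
    have haltb : a < b := by
      rw [hlt_iff, hkeyiff]
      exact Or.inr ⟨by rw [htopab], by omega⟩
    have hij : σ.symm a < σ.symm b := σ.symm.lt_iff_lt.mpr haltb
    by_contra hne
    have h1 : (σ.symm a : ℕ) + 1 < (σ.symm b : ℕ) := by
      rw [Fin.lt_def] at hij
      omega
    set m : Fin t := ⟨(σ.symm a : ℕ) + 1, lt_trans h1 (σ.symm b).isLt⟩ with hm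
    have hac : a < σ m := by
      have : σ.symm a < m := by rw [Fin.lt_def]; show (σ.symm a : ℕ) < (σ.symm a : ℕ) + 1; omega
      have h2 := σ.lt_iff_lt.mpr this
      rwa [OrderIso.apply_symm_apply] at h2
    have hcb : σ m < b := by
      have : m < σ.symm b := by rw [Fin.lt_def]; show (σ.symm a : ℕ) + 1 < (σ.symm b : ℕ); exact h1
      have h2 := σ.lt_iff_lt.mpr this
      rwa [OrderIso.apply_symm_apply] at h2
    rw [hlt_iff, hkeyiff] at hac hcb
    rcases hac with h3 | ⟨h3, h4⟩ <;> rcases hcb with h5 | ⟨h5, h6⟩ <;>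
      rw [htopab] at * <;> omega
  -- the bags
  set X : Fin (t + 1) → Finset V := fun i => S' ∪
      (Finset.univ.filter (fun j : Fin t => (j : ℕ) = (i : ℕ) ∨ (j : ℕ) + 1 = (i : ℕ))).image
        (fun j => (σ j).1) with hX
  have hXS : ∀ (i : Fin (t+1)), ∀ v ∈ S', v ∈ X i := by
    intro i v hv
    rw [hX]
    exact Finset.mem_union_left _ hv
  have hXmid : ∀ (m : {v : V // v ∉ S'}) (i : Fin (t+1)),
      ((σ.symm m : ℕ) = (i : ℕ) ∨ (σ.symm m : ℕ) + 1 = (i : ℕ)) → m.1 ∈ X i := by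
    intro m i hcond
    rw [hX]
    apply Finset.mem_union_right
    rw [Finset.mem_image]
    exact ⟨σ.symm m, by simp only [Finset.mem_filter, Finset.mem_univ, true_and]; exact hcond,
      by rw [OrderIso.apply_symm_apply]⟩
  have hmemX : ∀ (i : Fin (t+1)) v, v ∈ X i → v ∈ S' ∨ ∃ m : {v : V // v ∉ S'}, v = m.1 ∧
      ((σ.symm m : ℕ) = (i : ℕ) ∨ (σ.symm m : ℕ) + 1 = (i : ℕ)) := by
    intro i v hv
    rw [hX, Finset.mem_union] at hv
    rcases hv with hv | hv
    · exact Or.inl hv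
    · rw [Finset.mem_image] at hv
      obtain ⟨j, hj, hjv⟩ := hv
      rw [Finset.mem_filter] at hj
      refine Or.inr ⟨σ j, hjv ▸ rfl, ?_⟩
      rw [OrderIso.symm_apply_apply]
      exact hj.2
  refine ⟨t + 1, X, ?_, ?_, ?_, ?_⟩
  · -- cover
    intro v
    by_cases hv : v ∈ S'
    · exact ⟨0, hXS 0 v hv⟩
    · refine ⟨⟨(σ.symm ⟨v, hv⟩ : ℕ), by omega⟩, ?_⟩
      exact hXmid ⟨v, hv⟩ _ (Or.inl rfl)
  · -- edges
    have hedge : ∀ u v, A u v → ∃ i, u ∈ X i ∧ v ∈ X i := by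
      intro u v hA
      by_cases hu : u ∈ S' <;> by_cases hv : v ∈ S'
      · exact ⟨0, hXS 0 u hu, hXS 0 v hv⟩
      · refine ⟨⟨(σ.symm ⟨v, hv⟩ : ℕ), by omega⟩, hXS _ u hu, ?_⟩
        exact hXmid ⟨v, hv⟩ _ (Or.inl rfl)
      · refine ⟨⟨(σ.symm ⟨u, hu⟩ : ℕ), by omega⟩, ?_, hXS _ v hv⟩
        exact hXmid ⟨u, hu⟩ _ (Or.inl rfl)
      · by_cases hTuv : T u v
        · have hc := hconsec ⟨u, hu⟩ ⟨v, hv⟩ hTuv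
          refine ⟨⟨(σ.symm ⟨v, hv⟩ : ℕ), by omega⟩,
            hXmid ⟨u, hu⟩ _ (Or.inr ?_), hXmid ⟨v, hv⟩ _ (Or.inl rfl)⟩
          simp only []
          omega
        · exfalso
          have hvρ : v ≠ ρ := hmidne v hv
          have hdp : outDeg T (tpar v) = 1 := by
            rw [hdegeq]
            exact (hmidfacts v hv).2
          have hleaf := hstar u v (tpar v) hA hTuv (htpar v hvρ) hdp
          exact hu (hleafS' u ((hdeg0 u).mpr hleaf))
    rintro u v ⟨hne, hA | hA⟩
    · exact hedge u v hA
    · obtain ⟨i, h1, h2⟩ := hedge v u hA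
      exact ⟨i, h2, h1⟩
  · -- interpolation
    intro i j l hij hjl v hvi hvl
    by_cases hvS : v ∈ S'
    · exact hXS j v hvS
    · rcases hmemX i v hvi with h | ⟨m, rfl, hcondi⟩
      · exact absurd h hvS
      · rcases hmemX l m.1 hvl with h | ⟨m', hm', hcondl⟩
        · exact absurd h hvS
        · have hmm : m = m' := Subtype.ext hm'
          subst hmm
          rw [Fin.le_def] at hij hjl
          exact hXmid m j (by omega)
  · -- card bound
    intro i
    rw [hX]
    refine le_trans (Finset.card_union_le _ _) ?_
    have himg := Finset.card_image_le (s := Finset.univ.filter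
      (fun j : Fin t => (j : ℕ) = (i : ℕ) ∨ (j : ℕ) + 1 = (i : ℕ))) (f := fun j => (σ j).1)
    have hfil : (Finset.univ.filter
        (fun j : Fin t => (j : ℕ) = (i : ℕ) ∨ (j : ℕ) + 1 = (i : ℕ))).card ≤ 2 := by
      have hsub : ∀ j ∈ Finset.univ.filter
          (fun j : Fin t => (j : ℕ) = (i : ℕ) ∨ (j : ℕ) + 1 = (i : ℕ)),
          (j : ℕ) ∈ ({(i : ℕ), (i : ℕ) - 1} : Finset ℕ) := by
        intro j hj
        rw [Finset.mem_filter] at hj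
        rw [Finset.mem_insert, Finset.mem_singleton]
        omega
      calc (Finset.univ.filter
          (fun j : Fin t => (j : ℕ) = (i : ℕ) ∨ (j : ℕ) + 1 = (i : ℕ))).card
          ≤ ({(i : ℕ), (i : ℕ) - 1} : Finset ℕ).card :=
            Finset.card_le_card_of_injOn (fun j => (j : ℕ)) hsub
              (fun a _ b _ hab => Fin.val_injective hab)
        _ ≤ 2 := le_trans (Finset.card_insert_le _ _) (by simp)
    omega

end Assemble

/-- An acyclic digraph with a unique in-degree-zero vertex either has an out-branching with
at least `k` leaves, or the pathwidth of its underlying graph is at most `4k`. -/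
theorem stmt_10 {V : Type*} [Fintype V] (A : V → V → Prop) (k : ℕ)
    (hacyc : ∀ v : V, ¬ Relation.TransGen A v v)
    (hroot : ∃! v : V, ∀ u : V, ¬ A u v) :
    (∃ (r : V) (T : V → V → Prop), IsOutBranching A r T ∧ k ≤ leavesCount T) ∨
      pwLE (UN A) (4 * k) := by
  classical
  by_cases hk : ∃ (r : V) (T : V → V → Prop), IsOutBranching A r T ∧ k ≤ leavesCount T
  · exact Or.inl hk
  · push_neg at hk
    obtain ⟨r, hr, hru⟩ := hroot
    obtain ⟨T₀, hT₀⟩ := exists_branching A hacyc r hr (fun v hv => hru v hv)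
    obtain ⟨ρ, T, hT, hmax⟩ := exists_max_branching A r T₀ hT₀
    have hleaves : leavesCount T < k := hk ρ T hT
    have hstar := star_lemma A hacyc ρ T hT hmax
    exact Or.inr (pw_small A hacyc k ρ T hT hstar hleaves)
end

section
/- There exists a constant c > 0 such that for every strongly connected digraph D: either D has an out-branching with at least k leaves, or the pathwidth of the underlying undirected graph of D is at most c·k·log k. -/
open Relation

set_option linter.unusedSectionVars false
set_option linter.unusedVariables false

namespace OBD

variable {V : Type} [Fintype V] {A T : V → V → Prop} {r : V}

/-- No directed cycles in an out-branching. -/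
lemma no_cycle (hT : IsOutBranching A r T) : ∀ v, ¬ TransGen T v v := by
  have hreach := hT.2.2.2
  have key : ∀ v, ReflTransGen T r v → ¬ TransGen T v v := by
    intro v hv
    induction hv with
    | refl =>
      intro h
      obtain ⟨b, _, hbr⟩ := TransGen.tail'_iff.mp h
      exact hT.2.1 b hbr
    | @tail u v hru hTuv ih =>
      intro h
      obtain ⟨w, hvw, hwv⟩ := TransGen.tail'_iff.mp h
      have hvr : v ≠ r := fun hvr => hT.2.1 u (hvr ▸ hTuv)
      have huw : w = u := by
        obtain ⟨p, _, hp⟩ := hT.2.2.1 v hvr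
        rw [hp w hwv, hp u hTuv]
      exact ih (TransGen.head' hTuv (huw ▸ hvw))
  exact fun v => key v (hreach v)

lemma wf_up (hT : IsOutBranching A r T) : WellFounded T := by
  haveI : IsTrans V (TransGen T) := ⟨fun _ _ _ h h' => h.trans h'⟩
  haveI : IsIrrefl V (TransGen T) := ⟨fun v h => no_cycle hT v h⟩
  exact Subrelation.wf (fun {a b} h => TransGen.single h)
    (Finite.wellFounded_of_trans_of_irrefl (TransGen T))

lemma wf_down (hT : IsOutBranching A r T) : WellFounded (fun y x => T x y) := by
  haveI : IsTrans V (TransGen fun y x => T x y) := ⟨fun _ _ _ h h' => h.trans h'⟩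
  haveI : IsIrrefl V (TransGen fun y x => T x y) := by
    constructor
    intro v h
    exact no_cycle hT v ((Relation.transGen_swap).mp h)
  have W := Finite.wellFounded_of_trans_of_irrefl (TransGen fun y x => T x y)
  exact @Subrelation.wf V (TransGen fun y x => T x y) (fun y x => T x y)
    (fun {a b} h => TransGen.single h) W

lemma parent_unique (hT : IsOutBranching A r T) {u u' v : V} (h : T u v) (h' : T u' v) :
    u = u' := by
  have hvr : v ≠ r := fun hvr => hT.2.1 u (hvr ▸ h)
  obtain ⟨p, _, hp⟩ := hT.2.2.1 v hvr
  rw [hp u h, hp u' h']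

/-- Ancestors of a vertex are totally ordered. -/
lemma comp (hT : IsOutBranching A r T) :
    ∀ v a b, ReflTransGen T a v → ReflTransGen T b v →
      ReflTransGen T a b ∨ ReflTransGen T b a := by
  intro v
  induction v using (wf_up hT).induction with
  | _ v IH =>
    intro a b ha hb
    rcases ha.cases_tail with hva | ⟨c, hac, hcv⟩
    · exact Or.inr (hva ▸ hb)
    · rcases hb.cases_tail with hvb | ⟨d, hbd, hdv⟩
      · exact Or.inl (hvb ▸ ha)
      · have : d = c := parent_unique hT hdv hcv
        exact IH c hcv a b hac (this ▸ hbd)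

/-- subtree rooted at x -/
def sub (T : V → V → Prop) (x : V) : Set V := {v | ReflTransGen T x v}

lemma mem_sub_self (x : V) : x ∈ sub T x := ReflTransGen.refl

lemma sub_trans {x v : V} (h : v ∈ sub T x) : sub T v ⊆ sub T x :=
  fun _ h' => ReflTransGen.trans h h'

lemma child_not_anc (hT : IsOutBranching A r T) {x c : V} (h : T x c) :
    ¬ ReflTransGen T c x := fun h' => no_cycle hT x (TransGen.head' h h')

/-- distinct siblings have disjoint subtrees -/
lemma sib_eq (hT : IsOutBranching A r T) {z c c' v : V} (hc : T z c) (hc' : T z c')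
    (hv : v ∈ sub T c) (hv' : v ∈ sub T c') : c = c' := by
  rcases comp hT v c c' hv hv' with h | h
  · by_contra hne
    rcases h.cases_tail with he | ⟨w, hcw, hwc'⟩
    · exact hne he.symm
    · have : w = z := parent_unique hT hwc' hc'
      exact child_not_anc hT hc (this ▸ hcw)
  · by_contra hne
    rcases h.cases_tail with he | ⟨w, hcw, hwc⟩
    · exact hne he
    · have : w = z := parent_unique hT hwc hc
      exact child_not_anc hT hc' (this ▸ hcw)

lemma parent_mem_sub (hT : IsOutBranching A r T) {x v : V} (h : v ∈ sub T x) (hne : v ≠ x) :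
    ∃ u, T u v ∧ u ∈ sub T x := by
  rcases h.cases_tail with he | ⟨w, hxw, hwv⟩
  · exact absurd he hne
  · exact ⟨w, hwv, hxw⟩

lemma sub_step (hT : IsOutBranching A r T) {x v : V} (h : v ∈ sub T x) (hne : v ≠ x) :
    ∃ c, T x c ∧ v ∈ sub T c := by
  rcases h.cases_head with he | ⟨c, hxc, hcv⟩
  · exact absurd he.symm hne
  · exact ⟨c, hxc, hcv⟩

/-- leaves of T within a set -/
def lv (T : V → V → Prop) (S : Set V) : Set V := {v | v ∈ S ∧ ∀ u, ¬ T v u}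

lemma lv_mono {S S' : Set V} (h : S ⊆ S') : lv T S ⊆ lv T S' :=
  fun _ hv => ⟨h hv.1, hv.2⟩

/-- number of leaves in the subtree of x -/
noncomputable def lam (T : V → V → Prop) (x : V) : ℕ := (lv T (sub T x)).ncard

lemma lam_pos (hT : IsOutBranching A r T) (x : V) : 1 ≤ lam T x := by
  obtain ⟨m, hm, hmin⟩ := (wf_down hT).has_min (sub T x) ⟨x, mem_sub_self x⟩
  have : m ∈ lv T (sub T x) := by
    refine ⟨hm, fun u hu => ?_⟩
    exact hmin u (ReflTransGen.trans hm (ReflTransGen.single hu)) hu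
  have hpos : 0 < (lv T (sub T x)).ncard := by
    rw [Set.ncard_pos (Set.toFinite _)]
    exact ⟨m, this⟩
  exact hpos

lemma lam_mono (h : sub T x ⊆ sub T y) : lam T x ≤ lam T y :=
  Set.ncard_le_ncard (lv_mono h) (Set.toFinite _)

lemma lam_pair (hT : IsOutBranching A r T) {z c c' : V} (hc : T z c) (hc' : T z c')
    (hne : c ≠ c') : lam T c + lam T c' ≤ lam T z := by
  have hdisj : Disjoint (lv T (sub T c)) (lv T (sub T c')) := by
    rw [Set.disjoint_left]
    intro v hv hv'
    exact hne (sib_eq hT hc hc' hv.1 hv'.1)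
  have hsubc : sub T c ⊆ sub T z := sub_trans (ReflTransGen.single hc)
  have hsubc' : sub T c' ⊆ sub T z := sub_trans (ReflTransGen.single hc')
  unfold lam
  calc (lv T (sub T c)).ncard + (lv T (sub T c')).ncard
        = (lv T (sub T c) ∪ lv T (sub T c')).ncard := by
        rw [Set.ncard_union_eq hdisj (Set.toFinite _) (Set.toFinite _)]
      _ ≤ (lv T (sub T z)).ncard := Set.ncard_le_ncard
          (Set.union_subset (lv_mono hsubc) (lv_mono hsubc')) (Set.toFinite _)


/-! ### Extension of out-trees to out-branchings -/

lemma exit_on_path {S : Set V} : ∀ {a b : V}, ReflTransGen A a b → a ∈ S → b ∉ S →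
    ∃ s t, s ∈ S ∧ t ∉ S ∧ A s t := by
  intro a b h
  induction h with
  | refl => intro ha hb; exact absurd ha hb
  | @tail c d hac hcd ih =>
    intro ha hd
    by_cases hc : c ∈ S
    · exact ⟨c, d, hc, hd, hcd⟩
    · exact ih ha hc

lemma extend_step (hA : ∀ u v : V, ReflTransGen A u v) {S : Set V} {ρ : V} {T₀ : V → V → Prop}
    (h : IsOutTree A S ρ T₀) (hnu : S ≠ Set.univ) :
    ∃ (S' : Set V) (T₁ : V → V → Prop), IsOutTree A S' ρ T₁ ∧
      (Set.univ \ S').ncard < (Set.univ \ S).ncard ∧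
      treeLeaves S T₀ ≤ treeLeaves S' T₁ := by
  obtain ⟨t₀, ht₀⟩ : ∃ t₀, t₀ ∉ S := by
    by_contra hn; push_neg at hn; exact hnu (Set.eq_univ_of_forall hn)
  obtain ⟨s, t, hs, ht, hst⟩ := exit_on_path (hA ρ t₀) h.1 ht₀
  refine ⟨insert t S, (fun p q => T₀ p q ∨ (p = s ∧ q = t)), ⟨?_, ?_, ?_, ?_, ?_⟩, ?_, ?_⟩
  · exact Set.mem_insert_of_mem _ h.1
  · rintro u v (hv | ⟨rfl, rfl⟩)
    · obtain ⟨ha, hu, hv'⟩ := h.2.1 u v hv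
      exact ⟨ha, Set.mem_insert_of_mem _ hu, Set.mem_insert_of_mem _ hv'⟩
    · exact ⟨hst, Set.mem_insert_of_mem _ hs, Set.mem_insert _ _⟩
  · rintro u (hu | ⟨rfl, rfl⟩)
    · exact h.2.2.1 u hu
    · exact ht h.1
  · rintro v hv hvρ
    rcases Set.mem_insert_iff.mp hv with heq | hvS
    · refine ⟨s, Or.inr ⟨rfl, heq⟩, ?_⟩
      rintro u (hu | ⟨rfl, -⟩)
      · exact absurd (heq ▸ (h.2.1 u v hu).2.2) ht
      · rfl
    · obtain ⟨u, hu, huniq⟩ := h.2.2.2.1 v hvS hvρ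
      refine ⟨u, Or.inl hu, ?_⟩
      rintro u' (hu' | ⟨rfl, rfl⟩)
      · exact huniq u' hu'
      · exact absurd hvS ht
  · rintro v hv
    have mono : ∀ {a b}, ReflTransGen T₀ a b →
        ReflTransGen (fun p q => T₀ p q ∨ (p = s ∧ q = t)) a b :=
      fun h' => ReflTransGen.mono (fun a b hab => Or.inl hab) _ _ h'
    rcases Set.mem_insert_iff.mp hv with heq | hvS
    · rw [heq]
      exact ReflTransGen.tail (mono (h.2.2.2.2 s hs)) (Or.inr ⟨rfl, rfl⟩)
    · exact mono (h.2.2.2.2 v hvS)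
  · apply Set.ncard_lt_ncard _ (Set.toFinite _)
    constructor
    · intro x hx
      exact ⟨trivial, fun hx' => hx.2 (Set.mem_insert_of_mem _ hx')⟩
    · intro hsub
      have : t ∈ Set.univ \ S := ⟨trivial, ht⟩
      exact (hsub this).2 (Set.mem_insert _ _)
  · unfold treeLeaves
    set L₀ : Set V := {v | v ∈ S ∧ ∀ u, ¬ T₀ v u} with hL₀
    set L₁ : Set V := {v | v ∈ insert t S ∧ ∀ u, ¬ (T₀ v u ∨ (v = s ∧ u = t))} with hL₁
    have hsubL : insert t (L₀ \ {s}) ⊆ L₁ := by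
      rintro v hv
      rcases Set.mem_insert_iff.mp hv with rfl | ⟨hvL, hvs⟩
      · refine ⟨Set.mem_insert _ _, ?_⟩
        rintro u (hu | ⟨rfl, _⟩)
        · exact ht (h.2.1 v u hu).2.1
        · exact ht hs
      · refine ⟨Set.mem_insert_of_mem _ hvL.1, ?_⟩
        rintro u (hu | ⟨rfl, _⟩)
        · exact hvL.2 u hu
        · exact hvs rfl
    have htL : t ∉ L₀ \ {s} := fun hc => ht hc.1.1
    calc L₀.ncard ≤ (insert s (L₀ \ {s})).ncard := by
          apply Set.ncard_le_ncard _ (Set.toFinite _)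
          intro v hv
          by_cases hvs : v = s
          · exact hvs ▸ Set.mem_insert _ _
          · exact Set.mem_insert_of_mem _ ⟨hv, hvs⟩
      _ ≤ (L₀ \ {s}).ncard + 1 := Set.ncard_insert_le _ _
      _ = (insert t (L₀ \ {s})).ncard := (Set.ncard_insert_of_notMem htL (Set.toFinite _)).symm
      _ ≤ L₁.ncard := Set.ncard_le_ncard hsubL (Set.toFinite _)

lemma ext_main (hA : ∀ u v : V, ReflTransGen A u v) :
    ∀ (m : ℕ) (S : Set V) (ρ : V) (T₀ : V → V → Prop), (Set.univ \ S).ncard = m →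
    IsOutTree A S ρ T₀ →
    ∃ T₁, IsOutBranching A ρ T₁ ∧ treeLeaves S T₀ ≤ leavesCount T₁ := by
  intro m
  induction m using Nat.strong_induction_on with
  | _ m IH =>
    intro S ρ T₀ hm h
    by_cases hS : S = Set.univ
    · subst hS
      refine ⟨T₀, ⟨fun u v hv => (h.2.1 u v hv).1, h.2.2.1,
        fun v hv => h.2.2.2.1 v trivial hv, fun v => h.2.2.2.2 v trivial⟩, ?_⟩
      unfold leavesCount treeLeaves
      apply Set.ncard_le_ncard _ (Set.toFinite _)
      intro v hv; exact hv.2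
    · obtain ⟨S', T₁, h', hlt, hle⟩ := extend_step hA h hS
      obtain ⟨T₂, hb, hle₂⟩ := IH _ (hm ▸ hlt) S' ρ T₁ rfl h'
      exact ⟨T₂, hb, le_trans hle hle₂⟩

/-- Key combinatorial bound: if every out-branching has fewer than `k` leaves, then every
out-tree has fewer than `k` leaves. -/
lemma leafBound (hA : ∀ u v : V, ReflTransGen A u v) {k : ℕ}
    (hk : ∀ (ρ : V) (T' : V → V → Prop), IsOutBranching A ρ T' → leavesCount T' < k)
    {S : Set V} {ρ : V} {T₀ : V → V → Prop} (h : IsOutTree A S ρ T₀) :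
    treeLeaves S T₀ < k := by
  obtain ⟨T₁, hb, hle⟩ := ext_main hA _ S ρ T₀ rfl h
  exact lt_of_le_of_lt hle (hk ρ T₁ hb)

/-- The pendant lemma: attaching distinct heads to an out-tree. -/
lemma pendant (hA : ∀ u v : V, ReflTransGen A u v) {k : ℕ}
    (hk : ∀ (ρ : V) (T' : V → V → Prop), IsOutBranching A ρ T' → leavesCount T' < k)
    {S : Set V} {ρ : V} {T₀ : V → V → Prop} (h : IsOutTree A S ρ T₀)
    (H : Set V) (hdisj : ∀ y ∈ H, y ∉ S) (harc : ∀ y ∈ H, ∃ u ∈ S, A u y) :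
    H.ncard < k := by
  classical
  have hch : ∀ y, ∃ u, y ∈ H → (u ∈ S ∧ A u y) := by
    intro y
    by_cases hy : y ∈ H
    · obtain ⟨u, hu, ha⟩ := harc y hy
      exact ⟨u, fun _ => ⟨hu, ha⟩⟩
    · exact ⟨ρ, fun hc => absurd hc hy⟩
  choose f hf using hch
  set T₁ : V → V → Prop := fun p q => T₀ p q ∨ (q ∈ H ∧ p = f q) with hT₁
  have htree : IsOutTree A (S ∪ H) ρ T₁ := by
    refine ⟨Or.inl h.1, ?_, ?_, ?_, ?_⟩
    · rintro u v (hv | ⟨hvH, rfl⟩)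
      · obtain ⟨ha, hu, hv'⟩ := h.2.1 u v hv
        exact ⟨ha, Or.inl hu, Or.inl hv'⟩
      · exact ⟨(hf v hvH).2, Or.inl (hf v hvH).1, Or.inr hvH⟩
    · rintro u (hu | ⟨hρH, rfl⟩)
      · exact h.2.2.1 u hu
      · exact hdisj ρ hρH h.1
    · rintro v hv hvρ
      rcases hv with hvS | hvH
      · obtain ⟨u, hu, huniq⟩ := h.2.2.2.1 v hvS hvρ
        refine ⟨u, Or.inl hu, ?_⟩
        rintro u' (hu' | ⟨hvH, rfl⟩)
        · exact huniq u' hu'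
        · exact absurd hvS (hdisj v hvH)
      · refine ⟨f v, Or.inr ⟨hvH, rfl⟩, ?_⟩
        rintro u' (hu' | ⟨_, rfl⟩)
        · exact absurd (h.2.1 u' v hu').2.2 (hdisj v hvH)
        · rfl
    · rintro v hv
      have mono : ∀ {a b}, ReflTransGen T₀ a b → ReflTransGen T₁ a b :=
        fun h' => ReflTransGen.mono (fun a b hab => Or.inl hab) _ _ h'
      rcases hv with hvS | hvH
      · exact mono (h.2.2.2.2 v hvS)
      · exact ReflTransGen.tail (mono (h.2.2.2.2 (f v) (hf v hvH).1)) (Or.inr ⟨hvH, rfl⟩)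
  have hlq := leafBound hA hk htree
  have : H ⊆ {v | v ∈ S ∪ H ∧ ∀ u, ¬ T₁ v u} := by
    intro y hy
    refine ⟨Or.inr hy, ?_⟩
    rintro u (hu | ⟨huH, heq⟩)
    · exact hdisj y hy (h.2.1 y u hu).2.1
    · exact hdisj y hy (heq ▸ (hf u huH).1)
  calc H.ncard ≤ treeLeaves (S ∪ H) T₁ := Set.ncard_le_ncard this (Set.toFinite _)
    _ < k := hlq

/-! ### Spine out-trees -/

lemma singleton_tree (x : V) : IsOutTree A {x} x (fun _ _ => False) := by
  refine ⟨rfl, fun u v h => h.elim, fun u h => h, ?_, ?_⟩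
  · rintro v rfl hv; exact absurd rfl hv
  · rintro v rfl; exact ReflTransGen.refl

/-- the restriction of `T` to a parent-closed set containing `r` is an out-tree -/
lemma prefix_tree (hT : IsOutBranching A r T) {P : Set V}
    (hr : r ∈ P) (hcl : ∀ v ∈ P, ∀ u, T u v → u ∈ P) :
    IsOutTree A P r (fun a b => T a b ∧ a ∈ P ∧ b ∈ P) := by
  refine ⟨hr, ?_, ?_, ?_, ?_⟩
  · exact fun u v h => ⟨hT.1 u v h.1, h.2.1, h.2.2⟩
  · exact fun u h => hT.2.1 u h.1
  · intro v hv hvr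
    obtain ⟨u, hu, huniq⟩ := hT.2.2.1 v hvr
    exact ⟨u, ⟨hu, hcl v hv u hu, hv⟩, fun u' h => huniq u' h.1⟩
  · intro v hv
    have key : ∀ v, ReflTransGen T r v → v ∈ P →
        ReflTransGen (fun a b => T a b ∧ a ∈ P ∧ b ∈ P) r v := by
      intro v h
      induction h with
      | refl => intro _; exact ReflTransGen.refl
      | @tail c d hrc hcd ih =>
        intro hd
        have hc : c ∈ P := hcl d hd c hcd
        exact ReflTransGen.tail (ih hc) ⟨hcd, hc, hd⟩
    exact key v (hT.2.2.2 v) hv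

/-- the spine consisting of `z` together with the subtrees of a set of its children. -/
lemma level_tree (hT : IsOutBranching A r T) {z : V} {C : Set V} (hC : ∀ c ∈ C, T z c) :
    IsOutTree A ({z} ∪ ⋃ c ∈ C, sub T c) z
      (fun a b => T a b ∧ a ∈ ({z} ∪ ⋃ c ∈ C, sub T c) ∧ b ∈ ({z} ∪ ⋃ c ∈ C, sub T c)) := by
  set Sp : Set V := {z} ∪ ⋃ c ∈ C, sub T c with hSp
  have hmemsub : ∀ {v}, v ∈ Sp → v ≠ z → ∃ c ∈ C, v ∈ sub T c := by
    rintro v (rfl | hv) hne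
    · exact absurd rfl hne
    · simpa using hv
  have hsubmem : ∀ {c v}, c ∈ C → v ∈ sub T c → v ∈ Sp := by
    intro c v hc hv
    right; simp only [Set.mem_iUnion]; exact ⟨c, hc, hv⟩
  refine ⟨Or.inl rfl, ?_, ?_, ?_, ?_⟩
  · exact fun u v h => ⟨hT.1 u v h.1, h.2.1, h.2.2⟩
  · rintro u ⟨hu, huSp, -⟩
    rcases huSp with rfl | huU
    · exact no_cycle hT u (TransGen.single hu)
    · simp only [Set.mem_iUnion] at huU
      obtain ⟨c, hc, hcu⟩ := huU
      exact no_cycle hT z (TransGen.head' (hC c hc) (ReflTransGen.tail hcu hu))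
  · intro v hv hvz
    obtain ⟨c, hc, hvc⟩ := hmemsub hv hvz
    by_cases hvc' : v = c
    · subst hvc'
      refine ⟨z, ⟨hC v hc, Or.inl rfl, hv⟩, fun u' h => parent_unique hT h.1 (hC v hc)⟩
    · obtain ⟨u, hu, huS⟩ := parent_mem_sub hT hvc hvc'
      exact ⟨u, ⟨hu, hsubmem hc huS, hv⟩, fun u' h => parent_unique hT h.1 hu⟩
  · intro v hv
    by_cases hvz : v = z
    · exact hvz ▸ ReflTransGen.refl
    · obtain ⟨c, hc, hvc⟩ := hmemsub hv hvz
      have key : ∀ v, ReflTransGen T c v →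
          ReflTransGen (fun a b => T a b ∧ a ∈ Sp ∧ b ∈ Sp) c v := by
        intro v h
        induction h with
        | refl => exact ReflTransGen.refl
        | @tail w d hcw hwd ih =>
          exact ReflTransGen.tail ih ⟨hwd, hsubmem hc hcw,
            hsubmem hc (ReflTransGen.tail hcw hwd)⟩
      exact ReflTransGen.head ⟨hC c hc, Or.inl rfl, hsubmem hc (mem_sub_self c)⟩ (key v hvc)


/-! ### The DFS-style strict total order -/

lemma above_parent (hT : IsOutBranching A r T) {a c w : V} (h : ReflTransGen T a c)
    (hne : a ≠ c) (hw : T w c) : ReflTransGen T a w := by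
  rcases h.cases_tail with heq | ⟨x, hax, hxc⟩
  · exact absurd heq.symm hne
  · exact (parent_unique hT hxc hw) ▸ hax

lemma anc_antisymm (hT : IsOutBranching A r T) {a b : V} (h : ReflTransGen T a b)
    (h' : ReflTransGen T b a) : a = b := by
  by_contra hne
  rcases h.cases_head with heq | ⟨c, hac, hcb⟩
  · exact hne heq
  · exact no_cycle hT a (TransGen.head' hac (hcb.trans h'))

/-- `u` comes before `v` in the DFS order determined by `key`. -/
def Prec (T : V → V → Prop) (key : V → ℕ) (u v : V) : Prop :=
  (ReflTransGen T u v ∧ u ≠ v) ∨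
  ∃ w c₁ c₂, T w c₁ ∧ T w c₂ ∧ key c₁ < key c₂ ∧
    ReflTransGen T c₁ u ∧ ReflTransGen T c₂ v

lemma prec_irrefl (hT : IsOutBranching A r T) (key : V → ℕ) (u : V) : ¬ Prec T key u u := by
  rintro (⟨-, hne⟩ | ⟨w, c₁, c₂, hc₁, hc₂, hk, h₁, h₂⟩)
  · exact hne rfl
  · exact absurd (sib_eq hT hc₁ hc₂ h₁ h₂) (fun h => lt_irrefl _ (h ▸ hk))

/-- existence of a deepest common ancestor -/
lemma dca (hT : IsOutBranching A r T) (u v : V) :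
    ∃ w, ReflTransGen T w u ∧ ReflTransGen T w v ∧
      ∀ z, ReflTransGen T z u → ReflTransGen T z v → ¬ TransGen T w z := by
  classical
  have hwf : WellFounded (fun a b : V => TransGen T b a) := by
    haveI : IsTrans V (fun a b : V => TransGen T b a) :=
      ⟨fun a b c h h' => TransGen.trans h' h⟩
    haveI : IsIrrefl V (fun a b : V => TransGen T b a) := ⟨fun a h => no_cycle hT a h⟩
    exact Finite.wellFounded_of_trans_of_irrefl _
  obtain ⟨w, hw, hmin⟩ := hwf.has_min {z | ReflTransGen T z u ∧ ReflTransGen T z v}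
    ⟨r, hT.2.2.2 u, hT.2.2.2 v⟩
  exact ⟨w, hw.1, hw.2, fun z hzu hzv hc => hmin z ⟨hzu, hzv⟩ hc⟩

lemma prec_total (hT : IsOutBranching A r T) {key : V → ℕ} (hki : Function.Injective key)
    {u v : V} (hne : u ≠ v) : Prec T key u v ∨ Prec T key v u := by
  classical
  by_cases huv : ReflTransGen T u v
  · exact Or.inl (Or.inl ⟨huv, hne⟩)
  by_cases hvu : ReflTransGen T v u
  · exact Or.inr (Or.inl ⟨hvu, hne.symm⟩)
  obtain ⟨w, hwu, hwv, hmin⟩ := dca hT u v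
  have hwune : w ≠ u := fun h => huv (h ▸ hwv)
  have hwvne : w ≠ v := fun h => hvu (h ▸ hwu)
  obtain ⟨c₁, hwc₁, hc₁u⟩ : ∃ c, T w c ∧ ReflTransGen T c u := by
    rcases hwu.cases_head with h | h
    · exact absurd h hwune
    · exact h
  obtain ⟨c₂, hwc₂, hc₂v⟩ : ∃ c, T w c ∧ ReflTransGen T c v := by
    rcases hwv.cases_head with h | h
    · exact absurd h hwvne
    · exact h
  have hcc : c₁ ≠ c₂ := by
    rintro rfl
    exact hmin c₁ hc₁u hc₂v (TransGen.single hwc₁)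
  have hkk : key c₁ ≠ key c₂ := fun h => hcc (hki h)
  rcases lt_or_gt_of_ne hkk with hlt | hgt
  · exact Or.inl (Or.inr ⟨w, c₁, c₂, hwc₁, hwc₂, hlt, hc₁u, hc₂v⟩)
  · exact Or.inr (Or.inr ⟨w, c₂, c₁, hwc₂, hwc₁, hgt, hc₂v, hc₁u⟩)

lemma prec_asymm (hT : IsOutBranching A r T) {key : V → ℕ}
    {u v : V} (h : Prec T key u v) (h' : Prec T key v u) : False := by
  rcases h with ⟨huv, hneuv⟩ | ⟨w, c₁, c₂, hwc₁, hwc₂, hk, hc₁u, hc₂v⟩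
  · rcases h' with ⟨hvu, -⟩ | ⟨w, c₁, c₂, hwc₁, hwc₂, hk, hc₁v, hc₂u⟩
    · exact hneuv (anc_antisymm hT huv hvu)
    · exact absurd (sib_eq hT hwc₁ hwc₂ hc₁v (hc₂u.trans huv))
        (fun h => lt_irrefl _ (h ▸ hk))
  · rcases h' with ⟨hvu, -⟩ | ⟨w', d₁, d₂, hw'd₁, hw'd₂, hk', hd₁v, hd₂u⟩
    · exact absurd (sib_eq hT hwc₁ hwc₂ hc₁u (hc₂v.trans hvu)) (fun h => lt_irrefl _ (h ▸ hk))
    · by_cases hww : w = w'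
      · subst hww
        have e₁ : c₁ = d₂ := sib_eq hT hwc₁ hw'd₂ hc₁u hd₂u
        have e₂ : c₂ = d₁ := sib_eq hT hwc₂ hw'd₁ hc₂v hd₁v
        rw [e₁, e₂] at hk
        omega
      · rcases comp hT u w w' (ReflTransGen.head hwc₁ hc₁u) (ReflTransGen.head hw'd₂ hd₂u)
          with hww' | hw'w
        · rcases comp hT u w' c₁ (ReflTransGen.head hw'd₂ hd₂u) hc₁u with hwc | hcw
          · by_cases heq : w' = c₁
            · have hcv : ReflTransGen T c₁ v := ReflTransGen.head (heq ▸ hw'd₁) hd₁v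
              exact absurd (sib_eq hT hwc₁ hwc₂ hcv hc₂v) (fun h => lt_irrefl _ (h ▸ hk))
            · exact hww (anc_antisymm hT hww' (above_parent hT hwc heq hwc₁))
          · have hcv : ReflTransGen T c₁ v := hcw.trans (ReflTransGen.head hw'd₁ hd₁v)
            exact absurd (sib_eq hT hwc₁ hwc₂ hcv hc₂v) (fun h => lt_irrefl _ (h ▸ hk))
        · rcases comp hT v w d₁ (ReflTransGen.head hwc₂ hc₂v) hd₁v with hwd | hdw
          · by_cases heq : w = d₁
            · have hdu : ReflTransGen T d₁ u := ReflTransGen.head (heq ▸ hwc₁) hc₁u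
              exact absurd (sib_eq hT hw'd₁ hw'd₂ hdu hd₂u) (fun h => lt_irrefl _ (h ▸ hk'))
            · exact hww (anc_antisymm hT (above_parent hT hwd heq hw'd₁) hw'w)
          · have hdu : ReflTransGen T d₁ u := hdw.trans (ReflTransGen.head hwc₁ hc₁u)
            exact absurd (sib_eq hT hw'd₁ hw'd₂ hdu hd₂u) (fun h => lt_irrefl _ (h ▸ hk'))

lemma prec_transit (hT : IsOutBranching A r T) {key : V → ℕ}
    {u v x : V} (h : Prec T key u v) (h' : Prec T key v x) : Prec T key u x := by
  rcases h with ⟨huv, hneuv⟩ | ⟨w, c₁, c₂, hwc₁, hwc₂, hk, hc₁u, hc₂v⟩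
  · rcases h' with ⟨hvx, hnevx⟩ | ⟨w, c₁, c₂, hwc₁, hwc₂, hk, hc₁v, hc₂x⟩
    · refine Or.inl ⟨huv.trans hvx, ?_⟩
      rintro rfl
      exact hneuv (anc_antisymm hT huv hvx)
    · rcases comp hT v u c₁ huv hc₁v with huc | hcu
      · by_cases heq : u = c₁
        · exact Or.inr ⟨w, c₁, c₂, hwc₁, hwc₂, hk, heq ▸ ReflTransGen.refl, hc₂x⟩
        · have huw : ReflTransGen T u w := above_parent hT huc heq hwc₁
          have hux : ReflTransGen T u x := huw.trans (ReflTransGen.head hwc₂ hc₂x)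
          refine Or.inl ⟨hux, ?_⟩
          rintro rfl
          have hwu : u = w := anc_antisymm hT huw (ReflTransGen.head hwc₂ hc₂x)
          exact child_not_anc hT (hwu ▸ hwc₂) (hwu ▸ hc₂x)
      · exact Or.inr ⟨w, c₁, c₂, hwc₁, hwc₂, hk, hcu, hc₂x⟩
  · rcases h' with ⟨hvx, hnevx⟩ | ⟨w', d₁, d₂, hw'd₁, hw'd₂, hk', hd₁v, hd₂x⟩
    · exact Or.inr ⟨w, c₁, c₂, hwc₁, hwc₂, hk, hc₁u, hc₂v.trans hvx⟩
    · by_cases hww : w = w'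
      · subst hww
        have e : c₂ = d₁ := sib_eq hT hwc₂ hw'd₁ hc₂v hd₁v
        exact Or.inr ⟨w, c₁, d₂, hwc₁, hw'd₂, lt_trans (e ▸ hk) hk', hc₁u, hd₂x⟩
      · rcases comp hT v w w' (ReflTransGen.head hwc₂ hc₂v) (ReflTransGen.head hw'd₁ hd₁v)
          with hww' | hw'w
        · rcases comp hT v w' c₂ (ReflTransGen.head hw'd₁ hd₁v) hc₂v with hwc | hcw
          · by_cases heq : w' = c₂
            · have hcx : ReflTransGen T c₂ x := heq ▸ (ReflTransGen.head hw'd₂ hd₂x)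
              exact Or.inr ⟨w, c₁, c₂, hwc₁, hwc₂, hk, hc₁u, hcx⟩
            · exact absurd (anc_antisymm hT hww' (above_parent hT hwc heq hwc₂)) hww
          · have hcx : ReflTransGen T c₂ x := hcw.trans (ReflTransGen.head hw'd₂ hd₂x)
            exact Or.inr ⟨w, c₁, c₂, hwc₁, hwc₂, hk, hc₁u, hcx⟩
        · rcases comp hT v w d₁ (ReflTransGen.head hwc₂ hc₂v) hd₁v with hwd | hdw
          · by_cases heq : w = d₁
            · have hdu : ReflTransGen T d₁ u := heq ▸ (ReflTransGen.head hwc₁ hc₁u)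
              exact Or.inr ⟨w', d₁, d₂, hw'd₁, hw'd₂, hk', hdu, hd₂x⟩
            · exact absurd (anc_antisymm hT (above_parent hT hwd heq hw'd₁) hw'w) hww
          · have hdu : ReflTransGen T d₁ u := hdw.trans (ReflTransGen.head hwc₁ hc₁u)
            exact Or.inr ⟨w', d₁, d₂, hw'd₁, hw'd₂, hk', hdu, hd₂x⟩


/-! ### Levels of the suffix structure -/

/-- the "late children" of `z` relative to the cut at `x`. -/
def LC (T : V → V → Prop) (key : V → ℕ) (x z : V) : Set V :=
  {c | T z c ∧ ∀ c', T z c' → ReflTransGen T c' x → key c' < key c}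

/-- the active levels at the cut `x`. -/
def Act (T : V → V → Prop) (key : V → ℕ) (x : V) : Set V :=
  {z | ReflTransGen T z x ∧ (LC T key x z).Nonempty}

lemma suffix_char (hT : IsOutBranching A r T) {key : V → ℕ} {x u : V}
    (h : Prec T key x u) :
    ∃ z, ReflTransGen T z x ∧ ∃ c ∈ LC T key x z, u ∈ sub T c := by
  rcases h with ⟨hxu, hne⟩ | ⟨w, c₁, c₂, hwc₁, hwc₂, hk, hc₁x, hc₂u⟩
  · obtain ⟨c, hxc, hcu⟩ : ∃ c, T x c ∧ ReflTransGen T c u := by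
      rcases hxu.cases_head with h | h
      · exact absurd h hne
      · exact h
    exact ⟨x, ReflTransGen.refl, c,
      ⟨hxc, fun c' hc' hcx' => absurd hcx' (child_not_anc hT hc')⟩, hcu⟩
  · refine ⟨w, ReflTransGen.head hwc₁ hc₁x, c₂, ⟨hwc₂, ?_⟩, hc₂u⟩
    intro c' hc' hc'x
    rwa [sib_eq hT hc' hwc₁ hc'x hc₁x]

lemma pend_after (hT : IsOutBranching A r T) {key : V → ℕ} {x z c v : V}
    (hzx : ReflTransGen T z x) (hc : c ∈ LC T key x z) (hv : v ∈ sub T c) :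
    Prec T key x v := by
  by_cases hzxe : z = x
  · subst hzxe
    refine Or.inl ⟨ReflTransGen.head hc.1 hv, ?_⟩
    rintro rfl
    exact child_not_anc hT hc.1 hv
  · obtain ⟨c', hzc', hc'x⟩ : ∃ c', T z c' ∧ ReflTransGen T c' x := by
      rcases hzx.cases_head with h | h
      · exact absurd h hzxe
      · exact h
    exact Or.inr ⟨z, c', c, hzc', hc.1, hc.2 c' hzc' hc'x, hc'x, hv⟩

/-- number of active levels is logarithmically bounded. -/
lemma act_card (hT : IsOutBranching A r T) {key : V → ℕ} {k : ℕ}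
    (hklam : ∀ a b, key a < key b → lam T a ≤ lam T b)
    (hleaf : leavesCount T ≤ k - 1) (hk2 : 2 ≤ k) (x : V) :
    (Act T key x).ncard ≤ Nat.log 2 (k - 1) + 1 := by
  classical
  -- doubling along the chain of active levels
  have double : ∀ z z', z ∈ Act T key x → z' ∈ Act T key x →
      ReflTransGen T z z' → z ≠ z' → 2 * lam T z' ≤ lam T z := by
    rintro z z' ⟨hzx, hz⟩ ⟨hz'x, hz'⟩ hzz' hne
    have hzxe : z ≠ x := by
      rintro rfl
      exact hne (anc_antisymm hT hzz' hz'x)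
    obtain ⟨c₀, hzc₀, hc₀x⟩ : ∃ c, T z c ∧ ReflTransGen T c x := by
      rcases hzx.cases_head with h | h
      · exact absurd h hzxe
      · exact h
    have hc₀z' : ReflTransGen T c₀ z' := by
      rcases comp hT x c₀ z' hc₀x hz'x with h | h
      · exact h
      · by_cases heq : z' = c₀
        · exact heq ▸ ReflTransGen.refl
        · exact absurd (anc_antisymm hT (above_parent hT h heq hzc₀) hzz') (Ne.symm hne)
    obtain ⟨c, hcLC⟩ := hz
    have hklt : key c₀ < key c := hcLC.2 c₀ hzc₀ hc₀x
    have hibound : lam T c₀ + lam T c ≤ lam T z :=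
      lam_pair hT hzc₀ hcLC.1 (fun h => lt_irrefl _ (h ▸ hklt))
    have h1 : lam T z' ≤ lam T c₀ := lam_mono (sub_trans hc₀z')
    have h2 : lam T c₀ ≤ lam T c := hklam _ _ hklt
    omega
  -- the map z ↦ log2 (lam z) is injective on the active levels
  have key2 : ∀ a b, a ∈ Act T key x → b ∈ Act T key x → ReflTransGen T a b → a ≠ b →
      Nat.log 2 (lam T b) < Nat.log 2 (lam T a) := by
    intro a b ha hb hab hneab
    have hd := double a b ha hb hab hneab
    have hb1 : 1 ≤ lam T b := lam_pos hT b
    calc Nat.log 2 (lam T b) < Nat.log 2 (lam T b) + 1 := Nat.lt_succ_self _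
      _ = Nat.log 2 (lam T b * 2) := (Nat.log_mul_base (by norm_num) (by omega)).symm
      _ ≤ Nat.log 2 (lam T a) := Nat.log_mono_right (by omega)
  have hginj : Set.InjOn (fun z => Nat.log 2 (lam T z)) (Act T key x) := by
    intro z hz z' hz' hgz
    have hgz' : Nat.log 2 (lam T z) = Nat.log 2 (lam T z') := hgz
    by_contra hne
    rcases comp hT x z z' hz.1 hz'.1 with h | h
    · have := key2 z z' hz hz' h hne
      omega
    · have := key2 z' z hz' hz h (Ne.symm hne)
      omega
  have himg : (fun z => Nat.log 2 (lam T z)) '' (Act T key x) ⊆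
      ↑(Finset.range (Nat.log 2 (k-1) + 1)) := by
    rintro i ⟨z, hz, rfl⟩
    simp only [Finset.coe_range, Set.mem_Iio]
    have h1 : lam T z ≤ k - 1 := by
      have : lam T z ≤ leavesCount T := by
        unfold lam leavesCount lv
        exact Set.ncard_le_ncard (fun v hv => hv.2) (Set.toFinite _)
      omega
    have h2 : Nat.log 2 (lam T z) ≤ Nat.log 2 (k-1) := Nat.log_mono_right h1
    omega
  calc (Act T key x).ncard = ((fun z => Nat.log 2 (lam T z)) '' Act T key x).ncard :=
        (Set.ncard_image_of_injOn hginj).symm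
    _ ≤ (↑(Finset.range (Nat.log 2 (k-1) + 1)) : Set ℕ).ncard :=
        Set.ncard_le_ncard himg (Set.toFinite _)
    _ = Nat.log 2 (k-1) + 1 := by rw [Set.ncard_coe_finset, Finset.card_range]


/-! ### Counting the bags -/

lemma ncard_biUnion_le {β : Type} (S : Set V) (f : V → Set β) (m : ℕ)
    (hfin : ∀ z, (f z).Finite) (hSfin : S.Finite)
    (h : ∀ z ∈ S, (f z).ncard ≤ m) : (⋃ z ∈ S, f z).ncard ≤ S.ncard * m := by
  classical
  have heq : (⋃ z ∈ S, f z) = ↑(hSfin.toFinset.biUnion fun z => (hfin z).toFinset) := by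
    ext y
    simp only [Set.mem_iUnion, Finset.coe_biUnion, Set.mem_iUnion, Finset.mem_coe,
      Set.Finite.mem_toFinset, Set.Finite.coe_toFinset]
  rw [heq, Set.ncard_coe_finset]
  calc (hSfin.toFinset.biUnion fun z => (hfin z).toFinset).card
      ≤ ∑ z ∈ hSfin.toFinset, ((hfin z).toFinset).card := Finset.card_biUnion_le
    _ ≤ hSfin.toFinset.card • m := by
        apply Finset.sum_le_card_nsmul
        intro z hz
        rw [← Set.ncard_eq_toFinset_card (f z) (hfin z)]
        exact h z (hSfin.mem_toFinset.mp hz)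
    _ = S.ncard * m := by rw [smul_eq_mul, Set.ncard_eq_toFinset_card S hSfin]

section Counting

variable {k : ℕ}

lemma out_bound (hA : ∀ u v : V, ReflTransGen A u v)
    (hk : ∀ (ρ : V) (T' : V → V → Prop), IsOutBranching A ρ T' → leavesCount T' < k)
    (x : V) : {y | y ≠ x ∧ A x y}.ncard < k := by
  apply pendant hA hk (singleton_tree x)
  · intro y hy hc
    exact hy.1 hc
  · intro y hy
    exact ⟨x, rfl, hy.2⟩

lemma fwd_bound (hA : ∀ u v : V, ReflTransGen A u v)
    (hk : ∀ (ρ : V) (T' : V → V → Prop), IsOutBranching A ρ T' → leavesCount T' < k)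
    (hT : IsOutBranching A r T) (key : V → ℕ) (x : V) :
    {y | Prec T key x y ∧ ∃ u, A u y ∧ (u = x ∨ Prec T key u x)}.ncard < k := by
  set P : Set V := {u | u = x ∨ Prec T key u x} with hP
  have hrP : r ∈ P := by
    by_cases h : r = x
    · exact Or.inl h
    · exact Or.inr (Or.inl ⟨hT.2.2.2 x, h⟩)
  have hcl : ∀ v ∈ P, ∀ u, T u v → u ∈ P := by
    rintro v hv u huv
    by_cases hux : u = x
    · exact Or.inl hux
    have hne : u ≠ v := by
      rintro rfl
      exact no_cycle hT u (TransGen.single huv)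
    have hPuv : Prec T key u v := Or.inl ⟨ReflTransGen.single huv, hne⟩
    rcases hv with rfl | hvx
    · exact Or.inr hPuv
    · exact Or.inr (prec_transit hT hPuv hvx)
  apply pendant hA hk (prefix_tree hT hrP hcl)
  · rintro y ⟨hxy, -⟩ hyP
    rcases hyP with rfl | hyx
    · exact prec_irrefl hT key y hxy
    · exact prec_asymm hT hxy hyx
  · rintro y ⟨-, u, hAu, hu⟩
    exact ⟨u, hu, hAu⟩

lemma back_bound (hA : ∀ u v : V, ReflTransGen A u v)
    (hk : ∀ (ρ : V) (T' : V → V → Prop), IsOutBranching A ρ T' → leavesCount T' < k)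
    (hT : IsOutBranching A r T) {key : V → ℕ}
    (hklam : ∀ a b, key a < key b → lam T a ≤ lam T b)
    (hleaf : leavesCount T ≤ k - 1) (hk2 : 2 ≤ k) (x : V) :
    {y | Prec T key y x ∧ ∃ u, A u y ∧ Prec T key x u}.ncard ≤
      (Nat.log 2 (k - 1) + 1) * k := by
  classical
  set Pend : V → Set V := fun z => ⋃ c ∈ LC T key x z, sub T c with hPend
  set Bz : V → Set V := fun z =>
    {z} ∪ {y | y ∉ ({z} ∪ Pend z) ∧ ∃ u ∈ Pend z, A u y} with hBz
  have hsub : {y | Prec T key y x ∧ ∃ u, A u y ∧ Prec T key x u} ⊆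
      ⋃ z ∈ Act T key x, Bz z := by
    rintro y ⟨hyx, u, hAuy, hxu⟩
    obtain ⟨z, hzx, c, hcLC, husub⟩ := suffix_char hT hxu
    have hzAct : z ∈ Act T key x := ⟨hzx, c, hcLC⟩
    have huPend : u ∈ Pend z := by
      simp only [hPend, Set.mem_iUnion]
      exact ⟨c, hcLC, husub⟩
    simp only [Set.mem_iUnion]
    refine ⟨z, hzAct, ?_⟩
    by_cases hymem : y ∈ ({z} ∪ Pend z : Set V)
    · rcases hymem with hyz | hyPend
      · exact Or.inl hyz
      · exfalso
        simp only [hPend, Set.mem_iUnion] at hyPend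
        obtain ⟨c', hc', hyc'⟩ := hyPend
        exact prec_asymm hT (pend_after hT hzx hc' hyc') hyx
    · exact Or.inr ⟨hymem, u, huPend, hAuy⟩
  have hBzcard : ∀ z ∈ Act T key x, (Bz z).ncard ≤ k := by
    intro z hz
    have hH : {y | y ∉ ({z} ∪ Pend z) ∧ ∃ u ∈ Pend z, A u y}.ncard < k := by
      apply pendant hA hk (level_tree hT (C := LC T key x z) (fun c hc => hc.1))
      · exact fun y hy => hy.1
      · rintro y ⟨-, u, hu, hAu⟩
        exact ⟨u, Or.inr hu, hAu⟩
    calc (Bz z).ncard ≤ ({z} : Set V).ncard +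
          {y | y ∉ ({z} ∪ Pend z) ∧ ∃ u ∈ Pend z, A u y}.ncard := Set.ncard_union_le _ _
      _ ≤ 1 + (k - 1) := by
          have := Set.ncard_singleton z
          omega
      _ = k := by omega
  calc {y | Prec T key y x ∧ ∃ u, A u y ∧ Prec T key x u}.ncard
      ≤ (⋃ z ∈ Act T key x, Bz z).ncard := Set.ncard_le_ncard hsub (Set.toFinite _)
    _ ≤ (Act T key x).ncard * k :=
        ncard_biUnion_le _ _ _ (fun z => Set.toFinite _) (Set.toFinite _) hBzcard
    _ ≤ (Nat.log 2 (k - 1) + 1) * k := by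
        apply Nat.mul_le_mul_right
        exact act_card hT hklam hleaf hk2 x

end Counting

end OBD

/-- There is a constant `c > 0` such that every strongly connected digraph either has an
out-branching with at least `k` leaves, or the pathwidth of its underlying graph is at
most `c · k · log k`. -/
theorem stmt_11 :
    ∃ c : ℝ, 0 < c ∧
      ∀ (V : Type) (_ : Fintype V) (A : V → V → Prop) (k : ℕ), 2 ≤ k →
        (∀ u v : V, Relation.ReflTransGen A u v) →
        ((∃ (r : V) (T : V → V → Prop), IsOutBranching A r T ∧ k ≤ leavesCount T) ∨
          ∃ w : ℕ, pwLE (UN A) w ∧ (w : ℝ) ≤ c * k * Real.log k) := by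

  classical
  refine ⟨20, by norm_num, ?_⟩
  intro V instV A k hk2 hA
  haveI : Fintype V := instV
  by_cases hOB : ∃ (r : V) (T : V → V → Prop), IsOutBranching A r T ∧ k ≤ leavesCount T
  · exact Or.inl hOB
  right
  push_neg at hOB
  have hk : ∀ (ρ : V) (T' : V → V → Prop), IsOutBranching A ρ T' → leavesCount T' < k :=
    fun ρ T' h => hOB ρ T' h
  have hk1R : (1:ℝ) < (k:ℝ) := by exact_mod_cast (by omega : 1 < k)
  have hlogpos : (0:ℝ) < Real.log k := Real.log_pos hk1R
  -- bound for the real-number estimate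
  set L : ℕ := Nat.log 2 (k - 1) with hL
  set w : ℕ := (L + 1) * k + 2 * k with hw
  have hwR : (w : ℝ) ≤ 20 * k * Real.log k := by
    have hl2 : (0.6931471803:ℝ) < Real.log 2 := Real.log_two_gt_d9
    have hlogk : Real.log 2 ≤ Real.log k :=
      Real.log_le_log (by norm_num) (by exact_mod_cast hk2)
    have hpow : (2:ℝ) ^ L ≤ (k:ℝ) := by
      have h1 : 2 ^ L ≤ k - 1 := Nat.pow_log_le_self 2 (by omega)
      have h2 : (2:ℕ) ^ L ≤ k := by omega
      exact_mod_cast h2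
    have hLlog : (L : ℝ) * Real.log 2 ≤ Real.log k := by
      calc (L : ℝ) * Real.log 2 = Real.log ((2:ℝ) ^ L) := by rw [Real.log_pow]
        _ ≤ Real.log k := Real.log_le_log (by positivity) hpow
    have hLnn : (0:ℝ) ≤ (L:ℝ) := Nat.cast_nonneg _
    have hkR : (2:ℝ) ≤ (k:ℝ) := by exact_mod_cast hk2
    have hprod : (L:ℝ) * 0.6931471803 ≤ (L:ℝ) * Real.log 2 :=
      mul_le_mul_of_nonneg_left (le_of_lt hl2) hLnn
    have hLle : (L:ℝ) ≤ 2 * Real.log ↑k := by nlinarith [hprod, hLlog]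
    have h3le : (3:ℝ) ≤ 6 * Real.log ↑k := by nlinarith [hlogk, hl2]
    have hfin : ((L:ℝ) + 3) ≤ 8 * Real.log ↑k := by linarith
    have hkpos : (0:ℝ) ≤ (k:ℝ) := by positivity
    rw [hw]
    push_cast
    calc ((L:ℝ) + 1) * ↑k + 2 * ↑k = ((L:ℝ) + 3) * ↑k := by ring
      _ ≤ (8 * Real.log ↑k) * ↑k := mul_le_mul_of_nonneg_right hfin hkpos
      _ ≤ 20 * ↑k * Real.log ↑k := by nlinarith [mul_nonneg hkpos (le_of_lt hlogpos)]
  rcases isEmpty_or_nonempty V with hV | hV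
  · refine ⟨0, ⟨0, fun _ => ∅, fun v => isEmptyElim v, fun u _ _ => isEmptyElim u,
      fun i => i.elim0, fun i => i.elim0⟩, ?_⟩
    simpa using mul_nonneg (by positivity : (0:ℝ) ≤ 20 * (k:ℝ)) (le_of_lt hlogpos)
  -- main case: build the out-branching and the order
  obtain ⟨r₀⟩ := hV
  obtain ⟨T, hT, -⟩ := OBD.ext_main hA ((Set.univ \ {r₀}).ncard) {r₀} r₀
    (fun _ _ => False) rfl (OBD.singleton_tree r₀)
  have hleaf : leavesCount T ≤ k - 1 := by have := hk r₀ T hT; omega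
  set N : ℕ := Fintype.card V + 1 with hN
  set e := Fintype.equivFin V with he
  set key : V → ℕ := fun c => OBD.lam T c * N + (e c).val with hkey
  have hstep : ∀ p q : V, OBD.lam T p < OBD.lam T q → key p < key q := by
    intro p q h
    have hep : (e p).val < N := by have := (e p).isLt; omega
    have h1 : key p < (OBD.lam T p + 1) * N := by
      simp only [hkey]
      calc OBD.lam T p * N + (e p).val < OBD.lam T p * N + N := by omega
        _ = (OBD.lam T p + 1) * N := by ring
    have h2 : (OBD.lam T p + 1) * N ≤ OBD.lam T q * N := Nat.mul_le_mul_right N h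
    have h3 : OBD.lam T q * N ≤ key q := Nat.le_add_right _ _
    omega
  have hklam : ∀ a b, key a < key b → OBD.lam T a ≤ OBD.lam T b := by
    intro a b h
    by_contra hc
    push_neg at hc
    exact absurd (hstep b a hc) (by omega)
  have hki : Function.Injective key := by
    intro a b hab
    have hlam : OBD.lam T a = OBD.lam T b := by
      by_contra hc
      rcases Nat.lt_or_ge (OBD.lam T a) (OBD.lam T b) with h | h
      · exact absurd hab (Nat.ne_of_lt (hstep a b h))
      · rcases Nat.lt_or_ge (OBD.lam T b) (OBD.lam T a) with h' | h'
        · exact absurd hab.symm (Nat.ne_of_lt (hstep b a h'))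
        · exact hc (le_antisymm h' h)
    have hval : (e a).val = (e b).val := by
      simp only [hkey, hlam] at hab
      omega
    exact e.injective (Fin.val_injective hval)
  haveI hSTO : IsStrictTotalOrder V (OBD.Prec T key) :=
    { trichotomous := by
        intro a b hab hba
        by_contra h
        rcases OBD.prec_total hT hki h with h' | h'
        · exact hab h'
        · exact hba h'
      irrefl := fun a => OBD.prec_irrefl hT key a
      trans := fun a b c h h' => OBD.prec_transit hT h h' }
  haveI : DecidableRel (OBD.Prec T key) := Classical.decRel _
  letI LO : LinearOrder V := linearOrderOfSTO (OBD.Prec T key)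
  have hlt_iff : ∀ a b : V, a < b ↔ OBD.Prec T key a b := fun a b => Iff.rfl
  have hle_iff : ∀ a b : V, a ≤ b ↔ (a = b ∨ OBD.Prec T key a b) := by
    intro a b
    rw [le_iff_lt_or_eq, hlt_iff]
    tauto
  set σ : Fin (Fintype.card V) ≃o V := monoEquivOfFin V rfl with hσ
  set Bag : V → Set V := fun x =>
    {y | y = x ∨ (y < x ∧ ∃ u, A u y ∧ x ≤ u) ∨ (x < y ∧ ∃ u, A u y ∧ u ≤ x)} with hBag
  have hBagCard : ∀ x, (Bag x).ncard ≤ w + 1 := by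
    intro x
    have hsub : Bag x ⊆ insert x
        ({y | y ≠ x ∧ A x y} ∪
         ({y | OBD.Prec T key y x ∧ ∃ u, A u y ∧ OBD.Prec T key x u} ∪
          {y | OBD.Prec T key x y ∧ ∃ u, A u y ∧ (u = x ∨ OBD.Prec T key u x)})) := by
      rintro y (rfl | ⟨hyx, u, hAu, hxu⟩ | ⟨hxy, u, hAu, hux⟩)
      · exact Set.mem_insert _ _
      · rcases (hle_iff x u).mp hxu with rfl | hxu'
        · exact Set.mem_insert_of_mem _ (Or.inl ⟨ne_of_lt hyx, hAu⟩)
        · exact Set.mem_insert_of_mem _ (Or.inr (Or.inl ⟨(hlt_iff y x).mp hyx, u, hAu, hxu'⟩))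
      · refine Set.mem_insert_of_mem _ (Or.inr (Or.inr ⟨(hlt_iff x y).mp hxy, u, hAu, ?_⟩))
        exact (hle_iff u x).mp hux
    have h1 := OBD.out_bound hA hk x
    have h2 := OBD.back_bound hA hk hT hklam hleaf hk2 x
    have h3 := OBD.fwd_bound hA hk hT key x
    calc (Bag x).ncard ≤ _ := Set.ncard_le_ncard hsub (Set.toFinite _)
      _ ≤ _ + 1 := Set.ncard_insert_le _ _
      _ ≤ ({y | y ≠ x ∧ A x y}.ncard +
            ({y | OBD.Prec T key y x ∧ ∃ u, A u y ∧ OBD.Prec T key x u} ∪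
             {y | OBD.Prec T key x y ∧ ∃ u, A u y ∧ (u = x ∨ OBD.Prec T key u x)}).ncard) + 1 := by
          have := Set.ncard_union_le ({y | y ≠ x ∧ A x y})
            ({y | OBD.Prec T key y x ∧ ∃ u, A u y ∧ OBD.Prec T key x u} ∪
             {y | OBD.Prec T key x y ∧ ∃ u, A u y ∧ (u = x ∨ OBD.Prec T key u x)})
          omega
      _ ≤ w + 1 := by
          have h4 := Set.ncard_union_le
            {y | OBD.Prec T key y x ∧ ∃ u, A u y ∧ OBD.Prec T key x u}
            {y | OBD.Prec T key x y ∧ ∃ u, A u y ∧ (u = x ∨ OBD.Prec T key u x)}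
          rw [← hL] at h2
          rw [hw]
          omega
  refine ⟨w, ⟨Fintype.card V, fun i => (Set.toFinite (Bag (σ i))).toFinset,
    ?_, ?_, ?_, ?_⟩, hwR⟩
  · intro v
    refine ⟨σ.symm v, ?_⟩
    rw [Set.Finite.mem_toFinset]
    simp only [OrderIso.apply_symm_apply]
    exact Or.inl rfl
  · rintro u v ⟨hne, hAor⟩
    rcases hAor with hAuv | hAvu
    · refine ⟨σ.symm u, ?_, ?_⟩
      · rw [Set.Finite.mem_toFinset]
        simp only [OrderIso.apply_symm_apply]
        exact Or.inl rfl
      · rw [Set.Finite.mem_toFinset]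
        simp only [OrderIso.apply_symm_apply]
        rcases lt_trichotomy v u with h | h | h
        · exact Or.inr (Or.inl ⟨h, u, hAuv, le_refl u⟩)
        · exact absurd h.symm hne
        · exact Or.inr (Or.inr ⟨h, u, hAuv, le_refl u⟩)
    · refine ⟨σ.symm v, ?_, ?_⟩
      · rw [Set.Finite.mem_toFinset]
        simp only [OrderIso.apply_symm_apply]
        rcases lt_trichotomy u v with h | h | h
        · exact Or.inr (Or.inl ⟨h, v, hAvu, le_refl v⟩)
        · exact absurd h hne
        · exact Or.inr (Or.inr ⟨h, v, hAvu, le_refl v⟩)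
      · rw [Set.Finite.mem_toFinset]
        simp only [OrderIso.apply_symm_apply]
        exact Or.inl rfl
  · intro i j l hij hjl v hvi hvl
    rw [Set.Finite.mem_toFinset] at hvi hvl ⊢
    have hax : σ i ≤ σ j := σ.le_iff_le.mpr hij
    have hxb : σ j ≤ σ l := σ.le_iff_le.mpr hjl
    rcases lt_trichotomy v (σ j) with hvx | hvx | hxv
    · -- v before the middle cut: use the right membership
      rcases hvl with heq | ⟨hvb, u, hAu, hbu⟩ | ⟨hbv, -⟩
      · exact absurd (heq ▸ lt_of_lt_of_le hvx hxb) (lt_irrefl _)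
      · exact Or.inr (Or.inl ⟨hvx, u, hAu, le_trans hxb hbu⟩)
      · exact absurd (lt_trans (lt_of_lt_of_le hvx hxb) hbv) (lt_irrefl _)
    · exact Or.inl hvx
    · rcases hvi with heq | ⟨hva, -⟩ | ⟨hav, u, hAu, hua⟩
      · exact absurd (heq ▸ lt_of_le_of_lt hax hxv) (lt_irrefl _)
      · exact absurd (lt_trans hxv (lt_of_lt_of_le hva hax)) (lt_irrefl _)
      · exact Or.inr (Or.inr ⟨hxv, u, hAu, le_trans hua hax⟩)
  · intro i
    rw [← Set.ncard_eq_toFinset_card (Bag (σ i)) (Set.toFinite _)]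
    exact hBagCard (σ i)
end

section
/- Let D be a digraph such that for every pair R, Q of distinct strong components of D, if there is an arc from R to Q then every vertex of Q has an in-neighbor in R. Then either D has no out-branching, or the maximum number of leaves over all out-branchings of D equals the maximum number of leaves over all out-trees of D. -/
open Relation

section AuxStmt12

variable {V : Type*} [Fintype V]

private lemma stmt12_leaves_bound (S : Set V) (T : V → V → Prop) :
    treeLeaves S T ≤ Fintype.card V := by
  rw [treeLeaves, ← Nat.card_eq_fintype_card, ← Set.ncard_univ]
  exact Set.ncard_le_ncard (Set.subset_univ _) Set.finite_univ

private lemma stmt12_leavesCount_bound (T : V → V → Prop) :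
    leavesCount T ≤ Fintype.card V := by
  rw [leavesCount, ← Nat.card_eq_fintype_card, ← Set.ncard_univ]
  exact Set.ncard_le_ncard (Set.subset_univ _) Set.finite_univ

private lemma stmt12_ob_of_univ {A : V → V → Prop} {r : V} {T : V → V → Prop}
    (hT : IsOutTree A Set.univ r T) : IsOutBranching A r T :=
  ⟨fun u v huv => (hT.2.1 u v huv).1, hT.2.2.1,
    fun v hv => hT.2.2.2.1 v (Set.mem_univ v) hv, fun v => hT.2.2.2.2 v (Set.mem_univ v)⟩

private lemma stmt12_leaves_univ (T : V → V → Prop) :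
    treeLeaves Set.univ T = leavesCount T := by
  simp [treeLeaves, leavesCount]

/-- One-step extension of a non-spanning out-tree, preserving the number of leaves. -/
private lemma stmt12_step (A : V → V → Prop)
    (h : ∀ v w : V, strongComp A v ≠ strongComp A w →
      (∃ a ∈ strongComp A v, ∃ b ∈ strongComp A w, A a b) →
      ∀ q ∈ strongComp A w, ∃ a ∈ strongComp A v, A a q)
    (r0 : V) (hr0 : ∀ v, Relation.ReflTransGen A r0 v)
    (S : Set V) (r : V) (T : V → V → Prop) (hT : IsOutTree A S r T)
    (hne : S ≠ Set.univ) :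
    ∃ (S' : Set V) (r' : V) (T' : V → V → Prop),
      IsOutTree A S' r' T' ∧ S ⊂ S' ∧ treeLeaves S T ≤ treeLeaves S' T' := by
  obtain ⟨hrS, harc, hroot, huniq, hreach⟩ := hT
  by_cases hout : ∃ u ∈ S, ∃ v, v ∉ S ∧ A u v
  · -- Case A: extend by an outgoing arc
    obtain ⟨u, huS, v0, hv0, huv⟩ := hout
    have hv0r : v0 ≠ r := fun hh => hv0 (hh ▸ hrS)
    refine ⟨insert v0 S, r, fun a b => T a b ∨ (a = u ∧ b = v0), ⟨?_, ?_, ?_, ?_, ?_⟩, ?_, ?_⟩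
    · exact Set.mem_insert_of_mem _ hrS
    · rintro a b (hab | ⟨rfl, rfl⟩)
      · exact ⟨(harc a b hab).1, Set.mem_insert_of_mem _ (harc a b hab).2.1,
          Set.mem_insert_of_mem _ (harc a b hab).2.2⟩
      · exact ⟨huv, Set.mem_insert_of_mem _ huS, Set.mem_insert _ _⟩
    · rintro x (hx | ⟨rfl, hx⟩)
      · exact hroot x hx
      · exact hv0r hx.symm
    · intro w hw hwr
      by_cases hwv : w = v0
      · subst hwv
        refine ⟨u, Or.inr ⟨rfl, rfl⟩, ?_⟩
        rintro y (hy | hy2)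
        · exact absurd (harc y w hy).2.2 hv0
        · exact hy2.1
      · have hwS : w ∈ S := (Set.mem_insert_iff.mp hw).resolve_left hwv
        obtain ⟨p, hp, hpu⟩ := huniq w hwS hwr
        refine ⟨p, Or.inl hp, ?_⟩
        rintro y (hy | ⟨rfl, rfl⟩)
        · exact hpu y hy
        · exact absurd rfl hwv
    · intro w hw
      rcases Set.mem_insert_iff.mp hw with hwv | hwS
      · subst hwv
        exact (Relation.ReflTransGen.mono (fun a b hab => Or.inl hab) _ _ (hreach u huS)).tail (Or.inr ⟨rfl, rfl⟩)
      · exact Relation.ReflTransGen.mono (fun a b hab => Or.inl hab) _ _ (hreach w hwS)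
    · exact Set.ssubset_insert hv0
    · -- leaves
      set L := {v : V | v ∈ S ∧ ∀ u', ¬ T v u'} with hL
      have hsub : insert v0 (L \ {u}) ⊆
          {v : V | v ∈ insert v0 S ∧ ∀ x, ¬ (T v x ∨ (v = u ∧ x = v0))} := by
        rintro w (rfl | ⟨⟨hwS, hwl⟩, hwu⟩)
        · refine ⟨Set.mem_insert _ _, ?_⟩
          rintro x (hx | ⟨rfl, rfl⟩)
          · exact hv0 (harc _ _ hx).2.1
          · exact hv0 huS
        · refine ⟨Set.mem_insert_of_mem _ hwS, ?_⟩
          rintro x (hx | ⟨rfl, rfl⟩)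
          · exact hwl x hx
          · exact hwu rfl
      have h1 : L.ncard ≤ (L \ {u}).ncard + 1 := by
        have : L ⊆ (L \ {u}) ∪ {u} := by
          intro x hx
          by_cases hxu : x = u
          · exact Or.inr (by simp [hxu])
          · exact Or.inl ⟨hx, by simp [hxu]⟩
        calc L.ncard ≤ ((L \ {u}) ∪ {u}).ncard :=
              Set.ncard_le_ncard this (Set.toFinite _)
          _ ≤ (L \ {u}).ncard + ({u} : Set V).ncard := Set.ncard_union_le _ _
          _ = (L \ {u}).ncard + 1 := by rw [Set.ncard_singleton]
      have h2 : (insert v0 (L \ {u})).ncard = (L \ {u}).ncard + 1 := by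
        refine Set.ncard_insert_of_notMem (fun hc => hv0 hc.1.1) (Set.toFinite _)
      calc treeLeaves S T = L.ncard := rfl
        _ ≤ (L \ {u}).ncard + 1 := h1
        _ = (insert v0 (L \ {u})).ncard := h2.symm
        _ ≤ treeLeaves (insert v0 S) (fun a b => T a b ∨ (a = u ∧ b = v0)) :=
            Set.ncard_le_ncard hsub (Set.toFinite _)
  · -- Case B: no outgoing arc; re-root
    push_neg at hout
    have hclosed : ∀ u ∈ S, ∀ v, A u v → v ∈ S := by
      intro u hu v huv
      by_contra hv
      exact (hout u hu v hv) huv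
    have hclosedRT : ∀ u ∈ S, ∀ v, Relation.ReflTransGen A u v → v ∈ S := by
      intro u hu v huv
      induction huv with
      | refl => exact hu
      | tail _ hbc ih => exact hclosed _ ih _ hbc
    obtain ⟨w0, hw0⟩ := Set.ne_univ_iff_exists_notMem S |>.mp hne
    have hr0S : r0 ∉ S := fun hc => hw0 (hclosedRT r0 hc w0 (hr0 w0))
    have hTA : ∀ v ∈ S, Relation.ReflTransGen A r v :=
      fun v hv => Relation.ReflTransGen.mono (fun a b hab => (harc a b hab).1) _ _ (hreach v hv)
    -- find an arc entering the strong component of r from outside it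
    have key : ∀ a, Relation.ReflTransGen A a r →
        a ∈ strongComp A r ∨
        ∃ x y, A x y ∧ y ∈ strongComp A r ∧ ¬ Relation.ReflTransGen A r x := by
      intro a ha
      induction ha using Relation.ReflTransGen.head_induction_on with
      | refl => exact Or.inl ⟨Relation.ReflTransGen.refl, Relation.ReflTransGen.refl⟩
      | head hac hcr ih =>
        rename_i a' c'
        rcases ih with hc | ⟨x, y, hxy, hy, hnrx⟩
        · by_cases hra : Relation.ReflTransGen A r a'
          · exact Or.inl ⟨Relation.ReflTransGen.head hac hcr, hra⟩
          · exact Or.inr ⟨a', c', hac, hc, hra⟩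
        · exact Or.inr ⟨x, y, hxy, hy, hnrx⟩
    rcases key r0 (hr0 r) with hc | ⟨x, y, hxy, hy, hnrx⟩
    · exact absurd (hclosedRT r hrS r0 hc.2) hr0S
    have hxr : strongComp A x ≠ strongComp A r := by
      intro heq
      have : x ∈ strongComp A r := heq ▸ ⟨Relation.ReflTransGen.refl, Relation.ReflTransGen.refl⟩
      exact hnrx this.2
    obtain ⟨u, hu, hur⟩ := h x r hxr
      ⟨x, ⟨Relation.ReflTransGen.refl, Relation.ReflTransGen.refl⟩, y, hy, hxy⟩ r
      ⟨Relation.ReflTransGen.refl, Relation.ReflTransGen.refl⟩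
    have huS : u ∉ S := by
      intro hc
      exact hnrx ((hTA u hc).trans hu.1)
    have hune : u ≠ r := fun hh => huS (hh ▸ hrS)
    refine ⟨insert u S, u, fun a b => T a b ∨ (a = u ∧ b = r), ⟨?_, ?_, ?_, ?_, ?_⟩, ?_, ?_⟩
    · exact Set.mem_insert _ _
    · rintro a b (hab | ⟨rfl, rfl⟩)
      · exact ⟨(harc a b hab).1, Set.mem_insert_of_mem _ (harc a b hab).2.1,
          Set.mem_insert_of_mem _ (harc a b hab).2.2⟩
      · exact ⟨hur, Set.mem_insert _ _, Set.mem_insert_of_mem _ hrS⟩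
    · rintro x' (hx | ⟨rfl, hx⟩)
      · exact huS (harc x' u hx).2.2
      · exact hune hx
    · intro v hv hvu
      have hvS : v ∈ S := (Set.mem_insert_iff.mp hv).resolve_left hvu
      by_cases hvr : v = r
      · subst hvr
        refine ⟨u, Or.inr ⟨rfl, rfl⟩, ?_⟩
        rintro y' (hy' | hy2)
        · exact absurd hy' (hroot y')
        · exact hy2.1
      · obtain ⟨p, hp, hpu⟩ := huniq v hvS hvr
        refine ⟨p, Or.inl hp, ?_⟩
        rintro y' (hy' | ⟨rfl, rfl⟩)
        · exact hpu y' hy'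
        · exact absurd rfl hvr
    · intro v hv
      rcases Set.mem_insert_iff.mp hv with rfl | hvS
      · exact Relation.ReflTransGen.refl
      · exact Relation.ReflTransGen.head (Or.inr ⟨rfl, rfl⟩)
          (Relation.ReflTransGen.mono (fun a b hab => Or.inl hab) _ _ (hreach v hvS))
    · exact Set.ssubset_insert huS
    · refine Set.ncard_le_ncard ?_ (Set.toFinite _)
      rintro w ⟨hwS, hwl⟩
      refine ⟨Set.mem_insert_of_mem _ hwS, ?_⟩
      rintro x' (hx | ⟨rfl, rfl⟩)
      · exact hwl x' hx
      · exact huS hwS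

private lemma stmt12_main (A : V → V → Prop)
    (h : ∀ v w : V, strongComp A v ≠ strongComp A w →
      (∃ a ∈ strongComp A v, ∃ b ∈ strongComp A w, A a b) →
      ∀ q ∈ strongComp A w, ∃ a ∈ strongComp A v, A a q)
    (r0 : V) (hr0 : ∀ v, Relation.ReflTransGen A r0 v) :
    ∀ (n : ℕ) (S : Set V) (r : V) (T : V → V → Prop), Sᶜ.ncard ≤ n → IsOutTree A S r T →
    ∃ (r' : V) (T' : V → V → Prop), IsOutBranching A r' T' ∧ treeLeaves S T ≤ leavesCount T' := by
  intro n
  induction n with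
  | zero =>
    intro S r T hcard hT
    have hSe : Sᶜ = ∅ := (Set.ncard_eq_zero (Set.toFinite _)).mp (Nat.le_zero.mp hcard)
    have hSu : S = Set.univ := by
      rw [← Set.compl_empty_iff]; exact hSe
    subst hSu
    exact ⟨r, T, stmt12_ob_of_univ hT, le_of_eq (stmt12_leaves_univ T)⟩
  | succ n ih =>
    intro S r T hcard hT
    by_cases hS : S = Set.univ
    · subst hS
      exact ⟨r, T, stmt12_ob_of_univ hT, le_of_eq (stmt12_leaves_univ T)⟩
    · obtain ⟨S', r', T', hT', hss, hle⟩ := stmt12_step A h r0 hr0 S r T hT hS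
      have hlt : S'ᶜ.ncard < Sᶜ.ncard := by
        refine Set.ncard_lt_ncard ?_ (Set.toFinite _)
        exact ⟨Set.compl_subset_compl.mpr hss.1, fun hc =>
          hss.2 (Set.compl_subset_compl.mp hc)⟩
      obtain ⟨r'', T'', hB, hle'⟩ := ih S' r' T' (by omega) hT'
      exact ⟨r'', T'', hB, hle.trans hle'⟩

end AuxStmt12

/-- If whenever there is an arc from a strong component `R` to a distinct strong component `Q`,
every vertex of `Q` has an in-neighbor in `R`, then either `D` has no out-branching, or the
maximum leaf numbers over out-branchings and over out-trees coincide. -/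
theorem stmt_12 {V : Type*} [Fintype V] (A : V → V → Prop)
    (h : ∀ v w : V, strongComp A v ≠ strongComp A w →
      (∃ a ∈ strongComp A v, ∃ b ∈ strongComp A w, A a b) →
      ∀ q ∈ strongComp A w, ∃ a ∈ strongComp A v, A a q) :
    (¬ ∃ (r : V) (T : V → V → Prop), IsOutBranching A r T) ∨
      maxLeafOT A = maxLeafOB A := by
  by_cases hOB : ∃ (r : V) (T : V → V → Prop), IsOutBranching A r T
  · right
    obtain ⟨r0, T0, hT0⟩ := hOB
    have hr0 : ∀ v, Relation.ReflTransGen A r0 v :=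
      fun v => Relation.ReflTransGen.mono (fun a b hab => hT0.1 a b hab) _ _ (hT0.2.2.2 v)
    have hob_ot : ∀ (r : V) (T : V → V → Prop), IsOutBranching A r T →
        IsOutTree A Set.univ r T := by
      intro r T hT
      exact ⟨Set.mem_univ r, fun u v huv => ⟨hT.1 u v huv, Set.mem_univ u, Set.mem_univ v⟩,
        hT.2.1, fun v _ hv => hT.2.2.1 v hv, fun v _ => hT.2.2.2 v⟩
    have hbddOT : BddAbove {l : ℕ | ∃ (S : Set V) (r : V) (T : V → V → Prop),
        IsOutTree A S r T ∧ treeLeaves S T = l} := by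
      refine ⟨Fintype.card V, ?_⟩
      rintro l ⟨S, r, T, _, rfl⟩
      exact stmt12_leaves_bound S T
    have hbddOB : BddAbove {l : ℕ | ∃ (r : V) (T : V → V → Prop),
        IsOutBranching A r T ∧ leavesCount T = l} := by
      refine ⟨Fintype.card V, ?_⟩
      rintro l ⟨r, T, _, rfl⟩
      exact stmt12_leavesCount_bound T
    refine le_antisymm ?_ ?_
    · refine csSup_le ⟨leavesCount T0, Set.univ, r0, T0, hob_ot r0 T0 hT0,
        stmt12_leaves_univ T0⟩ ?_
      rintro l ⟨S, r, T, hT, rfl⟩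
      obtain ⟨r', T', hB, hle⟩ := stmt12_main A h r0 hr0 (Sᶜ.ncard) S r T le_rfl hT
      exact hle.trans (le_csSup hbddOB ⟨r', T', hB, rfl⟩)
    · refine csSup_le ⟨leavesCount T0, r0, T0, hT0, rfl⟩ ?_
      rintro l ⟨r, T, hT, rfl⟩
      exact le_csSup hbddOT ⟨Set.univ, r, T, hob_ot r T hT, stmt12_leaves_univ T⟩
  · exact Or.inl hOB
end

section
/- For every strongly connected digraph D with an out-branching, the maximum number of leaves in an out-tree of D equals the maximum number of leaves in an out-branching of D. -/
open Relation

lemma exists_exit {V : Type*} (A : V → V → Prop) (S : Set V) {a : V} (ha : a ∈ S) :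
    ∀ {v : V}, Relation.ReflTransGen A a v → v ∉ S → ∃ u ∈ S, ∃ w, w ∉ S ∧ A u w := by
  intro v h
  induction h with
  | refl => exact fun hv => absurd ha hv
  | @tail b c h1 h2 ih =>
    intro hc
    by_cases hb : b ∈ S
    · exact ⟨b, hb, c, hc, h2⟩
    · exact ih hb

lemma extend_step {V : Type*} [Fintype V] {A : V → V → Prop} {S : Set V} {r u w : V}
    {T : V → V → Prop} (hT : IsOutTree A S r T) (hu : u ∈ S) (hw : w ∉ S) (huw : A u w) :
    IsOutTree A (insert w S) r (fun a b => T a b ∨ (a = u ∧ b = w)) ∧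
    treeLeaves S T ≤ treeLeaves (insert w S) (fun a b => T a b ∨ (a = u ∧ b = w)) := by
  obtain ⟨hrS, harc, hroot, hpar, hreach⟩ := hT
  constructor
  · refine ⟨Set.mem_insert_of_mem _ hrS, ?_, ?_, ?_, ?_⟩
    · rintro a b (hab | ⟨rfl, rfl⟩)
      · exact ⟨(harc a b hab).1, Set.mem_insert_of_mem _ (harc a b hab).2.1,
          Set.mem_insert_of_mem _ (harc a b hab).2.2⟩
      · exact ⟨huw, Set.mem_insert_of_mem _ hu, Set.mem_insert _ _⟩
    · rintro x (hx | ⟨rfl, hr⟩)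
      · exact hroot x hx
      · exact hw (hr ▸ hrS)
    · rintro v hv hvr
      rcases Set.mem_insert_iff.mp hv with rfl | hvS
      · refine ⟨u, Or.inr ⟨rfl, rfl⟩, ?_⟩
        rintro y (hy | ⟨rfl, _⟩)
        · exact absurd (harc y v hy).2.2 hw
        · rfl
      · obtain ⟨p, hp, hup⟩ := hpar v hvS hvr
        refine ⟨p, Or.inl hp, ?_⟩
        rintro y (hy | ⟨rfl, rfl⟩)
        · exact hup y hy
        · exact absurd hvS hw
    · rintro v hv
      rcases Set.mem_insert_iff.mp hv with rfl | hvS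
      · exact Relation.ReflTransGen.tail
          (Relation.ReflTransGen.mono (fun a b h => Or.inl h) _ _ (hreach u hu)) (Or.inr ⟨rfl, rfl⟩)
      · exact Relation.ReflTransGen.mono (fun a b h => Or.inl h) _ _ (hreach v hvS)
  · -- leaf counting
    set L : Set V := {v : V | v ∈ S ∧ ∀ x, ¬ T v x} with hL
    set L' : Set V := {v : V | v ∈ insert w S ∧ ∀ x, ¬ (T v x ∨ (v = u ∧ x = w))} with hL'
    have hwL' : w ∈ L' := by
      refine ⟨Set.mem_insert _ _, ?_⟩
      rintro x (hx | ⟨rfl, _⟩)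
      · exact hw (harc w x hx).2.1
      · exact hw hu
    have hsub : insert w (L \ {u}) ⊆ L' := by
      rintro v (rfl | ⟨⟨hvS, hvl⟩, hvu⟩)
      · exact hwL'
      · refine ⟨Set.mem_insert_of_mem _ hvS, ?_⟩
        rintro x (hx | ⟨rfl, _⟩)
        · exact hvl x hx
        · exact hvu rfl
    have hwn : w ∉ L \ {u} := fun h => hw h.1.1
    calc treeLeaves S T = L.ncard := rfl
      _ ≤ (insert u (L \ {u})).ncard :=
          Set.ncard_le_ncard (fun v hv => by
            by_cases h : v = u
            · exact h ▸ Set.mem_insert _ _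
            · exact Set.mem_insert_of_mem _ ⟨hv, h⟩) (Set.toFinite _)
      _ ≤ (L \ {u}).ncard + 1 := Set.ncard_insert_le _ _
      _ = (insert w (L \ {u})).ncard := (Set.ncard_insert_of_notMem hwn (Set.toFinite _)).symm
      _ ≤ L'.ncard := Set.ncard_le_ncard hsub (Set.toFinite _)
      _ = treeLeaves (insert w S) (fun a b => T a b ∨ (a = u ∧ b = w)) := rfl

lemma tree_to_branching {V : Type*} [Fintype V] {A : V → V → Prop}
    (hsc : ∀ u v : V, Relation.ReflTransGen A u v) :
    ∀ (n : ℕ) (S : Set V) (r : V) (T : V → V → Prop), IsOutTree A S r T →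
      (Set.univ \ S).ncard = n →
      ∃ B : V → V → Prop, IsOutBranching A r B ∧ treeLeaves S T ≤ leavesCount B := by
  intro n
  induction n with
  | zero =>
    intro S r T hT hcard
    have hS : S = Set.univ := by
      have : Set.univ \ S = ∅ := (Set.ncard_eq_zero (Set.toFinite _)).mp hcard
      have h2 := Set.diff_eq_empty.mp this
      exact le_antisymm (Set.subset_univ _) h2
    subst hS
    obtain ⟨hr, harc, hroot, hpar, hreach⟩ := hT
    refine ⟨T, ⟨fun u v h => (harc u v h).1, hroot,
      fun v hv => hpar v (Set.mem_univ v) hv, fun v => hreach v (Set.mem_univ v)⟩, ?_⟩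
    have : treeLeaves Set.univ T = leavesCount T := by
      unfold treeLeaves leavesCount
      congr 1
      ext v
      simp
    exact this.le
  | succ n ih =>
    intro S r T hT hcard
    have hne : (Set.univ \ S).Nonempty := by
      rw [← Set.ncard_pos (Set.toFinite _)] at *
      omega
    obtain ⟨v, -, hvS⟩ := hne
    obtain ⟨u, hu, w, hw, huw⟩ := exists_exit A S hT.1 (hsc r v) hvS
    obtain ⟨hT', hle⟩ := extend_step hT hu hw huw
    have hcard' : (Set.univ \ insert w S).ncard = n := by
      have : Set.univ \ insert w S = (Set.univ \ S) \ {w} := by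
        ext x; simp [Set.mem_diff]; tauto
      have hmem : w ∈ Set.univ \ S := ⟨Set.mem_univ _, hw⟩
      rw [this, Set.ncard_diff_singleton_of_mem hmem, hcard]
      omega
    obtain ⟨B, hB, hBle⟩ := ih (insert w S) r _ hT' hcard'
    exact ⟨B, hB, le_trans hle hBle⟩

/-- For a strongly connected digraph with an out-branching, the maximum number of leaves in an
out-tree equals the maximum number of leaves in an out-branching. -/
theorem stmt_13 {V : Type*} [Fintype V] [Nonempty V] (A : V → V → Prop)
    (hsc : ∀ u v : V, Relation.ReflTransGen A u v)
    (hbr : ∃ (r : V) (T : V → V → Prop), IsOutBranching A r T) :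
    maxLeafOT A = maxLeafOB A := by
  have hbOB : BddAbove {l : ℕ | ∃ (r : V) (T : V → V → Prop),
      IsOutBranching A r T ∧ leavesCount T = l} := by
    refine ⟨Fintype.card V, fun l hl => ?_⟩
    obtain ⟨r, T, -, rfl⟩ := hl
    calc leavesCount T ≤ (Set.univ : Set V).ncard :=
          Set.ncard_le_ncard (Set.subset_univ _) (Set.toFinite _)
      _ = Fintype.card V := by rw [Set.ncard_univ, Nat.card_eq_fintype_card]
  have hbOT : BddAbove {l : ℕ | ∃ (S : Set V) (r : V) (T : V → V → Prop),
      IsOutTree A S r T ∧ treeLeaves S T = l} := by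
    refine ⟨Fintype.card V, fun l hl => ?_⟩
    obtain ⟨S, r, T, -, rfl⟩ := hl
    calc treeLeaves S T ≤ (Set.univ : Set V).ncard :=
          Set.ncard_le_ncard (Set.subset_univ _) (Set.toFinite _)
      _ = Fintype.card V := by rw [Set.ncard_univ, Nat.card_eq_fintype_card]
  have hOBtoOT : ∀ (r : V) (T : V → V → Prop), IsOutBranching A r T →
      IsOutTree A Set.univ r T ∧ treeLeaves Set.univ T = leavesCount T := by
    intro r T hT
    obtain ⟨harc, hroot, hpar, hreach⟩ := hT
    refine ⟨⟨Set.mem_univ r, fun u v h => ⟨harc u v h, Set.mem_univ u, Set.mem_univ v⟩,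
      hroot, fun v _ hv => hpar v hv, fun v _ => hreach v⟩, ?_⟩
    unfold treeLeaves leavesCount
    congr 1
    ext x
    simp
  obtain ⟨r0, T0, hT0⟩ := hbr
  have hneOT : ∃ l, l ∈ {l : ℕ | ∃ (S : Set V) (r : V) (T : V → V → Prop),
      IsOutTree A S r T ∧ treeLeaves S T = l} :=
    ⟨treeLeaves Set.univ T0, Set.univ, r0, T0, (hOBtoOT r0 T0 hT0).1, rfl⟩
  have hneOB : ∃ l, l ∈ {l : ℕ | ∃ (r : V) (T : V → V → Prop),
      IsOutBranching A r T ∧ leavesCount T = l} := ⟨leavesCount T0, r0, T0, hT0, rfl⟩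
  apply le_antisymm
  · apply csSup_le hneOT
    rintro l ⟨S, r, T, hT, rfl⟩
    obtain ⟨B, hB, hle⟩ := tree_to_branching hsc (Set.univ \ S).ncard S r T hT rfl
    exact le_trans hle (le_csSup hbOB ⟨r, B, hB, rfl⟩)
  · apply csSup_le hneOB
    rintro l ⟨r, T, hT, rfl⟩
    obtain ⟨h1, h2⟩ := hOBtoOT r T hT
    exact le_csSup hbOT ⟨Set.univ, r, T, h1, h2⟩
end

section
/- Let T be a 1-arc-exchange optimal out-branching of a digraph D rooted at r. Then there is no arc (u,v) ∈ A(D) \ A(T) such that u and v are non-leaves of T lying on a common directed path from r in T, u is strictly closer to r than v, and the parent of v has out-degree 1 in T. -/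
open Relation

private lemma noCycle_aux {V : Type*} (T : V → V → Prop) (r : V)
    (hr : ∀ u, ¬ T u r) (hp : ∀ v, v ≠ r → ∃! u, T u v) :
    ∀ v, Relation.ReflTransGen T r v → ¬ Relation.TransGen T v v := by
  intro v hv
  induction hv with
  | refl =>
    intro h
    obtain ⟨z, _, hz⟩ := Relation.TransGen.tail'_iff.mp h
    exact hr z hz
  | @tail b c hrb hbc ih =>
    intro hcc
    obtain ⟨z, hcz, hzc⟩ := Relation.TransGen.tail'_iff.mp hcc
    have hcr : c ≠ r := fun h => hr z (h ▸ hzc)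
    obtain ⟨q, hq, huniq⟩ := hp c hcr
    have hzb : z = b := (huniq z hzc).trans (huniq b hbc).symm
    exact ih (Relation.TransGen.head' hbc (hzb ▸ hcz))

/-- In a 1-arc-exchange optimal out-branching, there is no non-tree arc `(u,v)` where `u` and
`v` are non-leaves on a common path from the root, `u` strictly closer to the root, and the
parent of `v` has out-degree 1. -/
theorem stmt_16 {V : Type*} [Fintype V] (A : V → V → Prop) (r : V) (T : V → V → Prop)
    (hopt : OneAEOptimal A r T) :
    ∀ u v : V, A u v → ¬ T u v → (∃ x, T u x) → (∃ x, T v x) →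
      Relation.TransGen T u v →
      (∃ p, T p v ∧ outDeg T p = 1) → False := by
  intro u v hA hnT hu hv htrans hpd
  obtain ⟨uc, huc⟩ := hu
  obtain ⟨p, hpv, hdeg⟩ := hpd
  obtain ⟨⟨hTA, hroot, hpar, hreach⟩, hswap⟩ := hopt
  -- p's only child is v
  have honly : ∀ w, T p w → w = v := by
    intro w hw
    obtain ⟨a, ha⟩ := Set.ncard_eq_one.mp hdeg
    have h1 : w ∈ {u | T p u} := hw
    have h2 : v ∈ {u | T p u} := hpv
    rw [ha, Set.mem_singleton_iff] at h1 h2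
    rw [h1, h2]
  have hpu : p ≠ u := fun h => hnT (h ▸ hpv)
  have hnc := noCycle_aux T r hroot hpar
  have hvu : ¬ Relation.ReflTransGen T v u := fun h =>
    hnc u (hreach u) (Relation.TransGen.trans_left htrans h)
  have hvr : v ≠ r := fun h => hroot p (h ▸ hpv)
  -- the exchanged tree
  set T' : V → V → Prop :=
    fun a b => (T a b ∧ (a, b) ≠ ((p, v) : V × V)) ∨ (a, b) = ((u, v) : V × V) with hT'def
  have harc : ∀ a b, T' a b → A a b := by
    intro a b h
    rcases h with ⟨h1, _⟩ | heq
    · exact hTA a b h1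
    · simp only [Prod.mk.injEq] at heq
      rw [heq.1, heq.2]; exact hA
  have hroot' : ∀ a, ¬ T' a r := by
    intro a h
    rcases h with ⟨h1, _⟩ | heq
    · exact hroot a h1
    · simp only [Prod.mk.injEq] at heq
      exact hvr heq.2.symm
  have hpar' : ∀ w, w ≠ r → ∃! z, T' z w := by
    intro w hw
    by_cases hwv : w = v
    · subst hwv
      refine ⟨u, Or.inr rfl, ?_⟩
      intro z hz
      rcases hz with ⟨h1, h2⟩ | heq
      · obtain ⟨q, hq, huniq⟩ := hpar w hw
        have hzp : z = p := (huniq z h1).trans (huniq p hpv).symm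
        exact absurd (by rw [hzp]) h2
      · simp only [Prod.mk.injEq] at heq
        exact heq.1
    · obtain ⟨q, hq, huniq⟩ := hpar w hw
      refine ⟨q, Or.inl ⟨hq, fun heq => hwv (Prod.ext_iff.mp heq).2⟩, ?_⟩
      intro z hz
      rcases hz with ⟨h1, _⟩ | heq
      · exact huniq z h1
      · simp only [Prod.mk.injEq] at heq
        exact absurd heq.2 hwv
  have key : ∀ w, Relation.ReflTransGen T r w → ¬ Relation.ReflTransGen T v w →
      Relation.ReflTransGen T' r w := by
    intro w hw
    induction hw with
    | refl => intro _; exact Relation.ReflTransGen.refl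
    | @tail b c hrb hbc ih =>
      intro hnvc
      have hnvb : ¬ Relation.ReflTransGen T v b := fun h => hnvc (h.tail hbc)
      have hb := ih hnvb
      by_cases hc : ((b, c) : V × V) = (p, v)
      · simp only [Prod.mk.injEq] at hc
        exact absurd (by rw [hc.2]) hnvc
      · exact hb.tail (Or.inl ⟨hbc, hc⟩)
  have hru' : Relation.ReflTransGen T' r u := key u (hreach u) hvu
  have hrv' : Relation.ReflTransGen T' r v := hru'.tail (Or.inr rfl)
  have hreach' : ∀ w, Relation.ReflTransGen T' r w := by
    intro w
    have h := hreach w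
    induction h with
    | refl => exact Relation.ReflTransGen.refl
    | @tail b c hrb hbc ih =>
      by_cases hc : ((b, c) : V × V) = (p, v)
      · simp only [Prod.mk.injEq] at hc
        rw [hc.2]; exact hrv'
      · exact ih.tail (Or.inl ⟨hbc, hc⟩)
  have hOB : IsOutBranching A r T' := ⟨harc, hroot', hpar', hreach'⟩
  have hle := hswap (p, v) (u, v) hpv hA hnT hOB
  -- leaves of T are leaves of T'
  have hsub : {w : V | ∀ z, ¬ T w z} ⊆ {w : V | ∀ z, ¬ T' w z} := by
    intro w hw z hz
    rcases hz with ⟨h1, _⟩ | heq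
    · exact hw z h1
    · simp only [Prod.mk.injEq] at heq
      have hwu : w = u := heq.1
      exact hw uc (by rw [hwu]; exact huc)
  have hp_leaf' : p ∈ {w : V | ∀ z, ¬ T' w z} := by
    intro z hz
    rcases hz with ⟨h1, h2⟩ | heq
    · exact h2 (by rw [honly z h1])
    · simp only [Prod.mk.injEq] at heq
      exact hpu heq.1
  have hp_not : p ∉ {w : V | ∀ z, ¬ T w z} := fun h => h v hpv
  have hss : {w : V | ∀ z, ¬ T w z} ⊂ {w : V | ∀ z, ¬ T' w z} :=
    ⟨hsub, fun h => hp_not (h hp_leaf')⟩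
  have hlt : leavesCount T < leavesCount T' :=
    Set.ncard_lt_ncard hss (Set.toFinite _)
  exact absurd hle (not_le.mpr hlt)
end

section
/- Let T be a rooted tree with λ ≥ 2 leaves. Then there exists a vertex v of T such that the vertex set of T can be partitioned into two sets V' and V'' whose intersection is {v}, each inducing a subtree of T (V' containing v with some components of T−v, and V'' containing v with the remaining components), such that each of the two subtrees, counted with v possibly becoming a new leaf, has at least (λ−6)/4 and at most (3λ+2)/4 leaves. -/
open Relation

/-- Number of leaves of the part `S` of a tree relation `T`: vertices of `S` all of whose
`T`-children lie outside `S`. -/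
noncomputable def partLeaves {V : Type*} (T : V → V → Prop) (S : Set V) : ℕ :=
  {x : V | x ∈ S ∧ ∀ y, T x y → y ∉ S}.ncard

section StmtAuxSec
set_option linter.unusedSectionVars false

namespace StmtAux

variable {V : Type*} [Fintype V]

def chainLen (T : V → V → Prop) : ℕ → V → V → Prop
  | 0, a, b => a = b
  | n+1, a, b => ∃ c, chainLen T n a c ∧ T c b

lemma rtg_iff_chain {T : V → V → Prop} {a b : V} :
    ReflTransGen T a b ↔ ∃ n, chainLen T n a b := by
  constructor
  · intro h
    induction h with
    | refl => exact ⟨0, rfl⟩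
    | tail _ hbc ih => exact ⟨ih.choose + 1, _, ih.choose_spec, hbc⟩
  · rintro ⟨n, h⟩
    induction n generalizing b with
    | zero => cases h; exact .refl
    | succ n ih => obtain ⟨c, hc, hcb⟩ := h; exact (ih hc).tail hcb

variable {T : V → V → Prop} {r : V}

noncomputable def dep (T : V → V → Prop) (r : V) (v : V) : ℕ :=
  sInf {n | chainLen T n r v}

lemma dep_spec (hT : IsRootedTree T r) (v : V) : chainLen T (dep T r v) r v :=
  Nat.sInf_mem (rtg_iff_chain.1 (hT.2.2 v))

lemma dep_le {n : ℕ} {v : V} (h : chainLen T n r v) : dep T r v ≤ n :=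
  Nat.sInf_le h

lemma dep_root : dep T r r = 0 := Nat.le_zero.1 (dep_le rfl)

lemma dep_succ (hT : IsRootedTree T r) {u v : V} (h : T u v) :
    dep T r v = dep T r u + 1 := by
  have hvr : v ≠ r := fun hv => hT.1 u (hv ▸ h)
  have hle : dep T r v ≤ dep T r u + 1 := dep_le ⟨u, dep_spec hT u, h⟩
  have hspec := dep_spec hT v
  rcases hn : dep T r v with _ | m
  · rw [hn] at hspec; exact absurd hspec.symm hvr
  · rw [hn] at hspec
    obtain ⟨c, hc, hcv⟩ := hspec
    have : c = u := (hT.2.1 v hvr).unique hcv h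
    subst this
    have : dep T r c ≤ m := dep_le hc
    omega

lemma dep_mono (hT : IsRootedTree T r) {u v : V} (h : ReflTransGen T u v) :
    dep T r u ≤ dep T r v := by
  induction h with
  | refl => exact le_refl _
  | tail _ hbc ih => rw [dep_succ hT hbc]; omega

lemma dep_strict (hT : IsRootedTree T r) {u v : V} (h : ReflTransGen T u v) (hne : u ≠ v) :
    dep T r u < dep T r v := by
  rcases h.cases_head with rfl | ⟨c, huc, hcv⟩
  · exact absurd rfl hne
  · have := dep_mono hT hcv
    rw [dep_succ hT huc] at this
    omega

lemma rtg_antisymm (hT : IsRootedTree T r) {u v : V} (h1 : ReflTransGen T u v)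
    (h2 : ReflTransGen T v u) : u = v := by
  by_contra hne
  have := dep_strict hT h1 hne
  have := dep_strict hT h2 (Ne.symm hne)
  omega

def desc (T : V → V → Prop) (v : V) : Set V := {u | ReflTransGen T v u}

def leafSet (T : V → V → Prop) : Set V := {u | ∀ w, ¬ T u w}

noncomputable def lcnt (T : V → V → Prop) (v : V) : ℕ := (desc T v ∩ leafSet T).ncard

lemma self_mem_desc (v : V) : v ∈ desc T v := ReflTransGen.refl

lemma not_mem_desc_child (hT : IsRootedTree T r) {v c : V} (h : T v c) : v ∉ desc T c := by
  intro hv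
  have h1 := dep_mono hT hv
  rw [dep_succ hT h] at h1
  omega

lemma parent_mem_desc (hT : IsRootedTree T r) {c u x : V} (h1 : ReflTransGen T c u)
    (h2 : u ≠ c) (h3 : T x u) : x ∈ desc T c := by
  rcases h1.cases_tail with rfl | ⟨w, hcw, hwu⟩
  · exact absurd rfl h2
  · have hur : u ≠ r := fun hu => hT.1 x (hu ▸ h3)
    have : x = w := (hT.2.1 u hur).unique h3 hwu
    exact this ▸ hcw


lemma desc_disjoint (hT : IsRootedTree T r) {v c c' : V} (h : T v c) (h' : T v c')
    (hne : c ≠ c') : desc T c ∩ desc T c' = ∅ := by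
  have key : ∀ n u, dep T r u = n → u ∈ desc T c → u ∈ desc T c' → False := by
    intro n
    induction n using Nat.strong_induction_on with
    | _ n ih =>
      intro u hd hc hc'
      have hdc : dep T r c = dep T r v + 1 := dep_succ hT h
      have hdc' : dep T r c' = dep T r v + 1 := dep_succ hT h'
      by_cases huc : u = c
      · subst huc
        have := dep_strict hT hc' (Ne.symm hne)
        omega
      by_cases huc' : u = c'
      · subst huc'
        have := dep_strict hT hc hne
        omega
      have hur : u ≠ r := by
        rintro rfl
        have := dep_mono hT hc
        rw [dep_root] at this
        omega
      obtain ⟨x, hx, -⟩ := hT.2.1 u hur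
      have hxc := parent_mem_desc hT hc huc hx
      have hxc' := parent_mem_desc hT hc' huc' hx
      have hlt : dep T r x < n := by
        have := dep_succ hT hx
        omega
      exact ih _ hlt x rfl hxc hxc'
  ext u
  simp only [Set.mem_inter_iff, Set.mem_empty_iff_false, iff_false, not_and]
  intro hc hc'
  exact key _ u rfl hc hc'

lemma ncard_biUnion_leaf (hT : IsRootedTree T r) {v : V} (S : Finset V)
    (hS : ∀ c ∈ S, T v c) :
    ((⋃ c ∈ S, desc T c) ∩ leafSet T).ncard = ∑ c ∈ S, lcnt T c := by
  classical
  induction S using Finset.induction_on with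
  | empty => simp
  | @insert a S ha ih =>
    have hSa : ∀ c ∈ S, T v c := fun c hc => hS c (Finset.mem_insert_of_mem hc)
    have hUnion : ((⋃ c ∈ insert a S, desc T c) ∩ leafSet T)
        = (desc T a ∩ leafSet T) ∪ ((⋃ c ∈ S, desc T c) ∩ leafSet T) := by
      rw [Finset.set_biUnion_insert, Set.union_inter_distrib_right]
    rw [hUnion, Set.ncard_union_eq ?_ (Set.toFinite _) (Set.toFinite _),
      Finset.sum_insert ha, ih hSa]
    · rfl
    · rw [Set.disjoint_left]
      rintro x ⟨hxa, -⟩ ⟨hxU, -⟩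
      simp only [Set.mem_iUnion] at hxU
      obtain ⟨c, hc, hxc⟩ := hxU
      have hne : a ≠ c := fun h => ha (h ▸ hc)
      have := desc_disjoint hT (hS a (Finset.mem_insert_self a S)) (hSa c hc) hne
      exact absurd (Set.mem_inter hxa hxc) (by rw [this]; exact id)

lemma greedy {q : ℕ} (hq : 1 ≤ q) (w : V → ℕ) :
    ∀ C : Finset V, (∀ c ∈ C, w c + 1 ≤ q) → q ≤ ∑ c ∈ C, w c →
    ∃ S ⊆ C, q ≤ ∑ c ∈ S, w c ∧ ∑ c ∈ S, w c + 2 ≤ 2 * q := by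
  classical
  intro C
  induction C using Finset.strongInduction with
  | _ C ih =>
    intro hw hsum
    by_cases hcase : ∑ c ∈ C, w c + 2 ≤ 2 * q
    · exact ⟨C, le_refl _, hsum, hcase⟩
    · have hne : C.Nonempty := by
        rcases C.eq_empty_or_nonempty with rfl | h
        · simp at hsum; omega
        · exact h
      obtain ⟨c, hc⟩ := hne
      have hsub : C.erase c ⊂ C := Finset.erase_ssubset hc
      have hsum' : ∑ x ∈ C.erase c, w x + w c = ∑ x ∈ C, w x := by
        rw [Finset.sum_erase_add _ _ hc]
      have hwc := hw c hc
      obtain ⟨S, hS1, hS2⟩ := ih (C.erase c) hsub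
        (fun x hx => hw x (Finset.mem_of_mem_erase hx)) (by omega)
      exact ⟨S, hS1.trans (Finset.erase_subset _ _), hS2⟩

end StmtAux

end StmtAuxSec

open StmtAux

/-- A rooted tree with `λ ≥ 2` leaves admits a vertex `v` splitting it into two subtrees
(meeting exactly in `v`, each a union of `v` with some components of `T - v`) each having
between `(λ-6)/4` and `(3λ+2)/4` leaves. -/
theorem stmt_18 {V : Type*} [Fintype V] (T : V → V → Prop) (r : V)
    (hT : IsRootedTree T r) (lam : ℕ) (hlam : leavesCount T = lam) (h2 : 2 ≤ lam) :
    ∃ (v : V) (V' V'' : Set V),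
      V' ∪ V'' = Set.univ ∧
      V' ∩ V'' = {v} ∧
      (∀ a b : V, T a b → a ≠ v → b ≠ v → (a ∈ V' ↔ b ∈ V')) ∧
      (((lam : ℝ) - 6) / 4 ≤ (partLeaves T V' : ℝ) ∧
        (partLeaves T V' : ℝ) ≤ (3 * (lam : ℝ) + 2) / 4) ∧
      (((lam : ℝ) - 6) / 4 ≤ (partLeaves T V'' : ℝ) ∧
        (partLeaves T V'' : ℝ) ≤ (3 * (lam : ℝ) + 2) / 4) := by
  classical
  have hLS : leafSet T = {v : V | ∀ u, ¬ T v u} := rfl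
  rcases eq_or_lt_of_le h2 with hl2 | hl3
  -- case lam = 2
  · refine ⟨r, Set.univ, {r}, by simp, by simp, fun a b _ _ _ => by simp, ?_, ?_⟩
    · have hPV : partLeaves T Set.univ = lam := by
        rw [← hlam]
        unfold partLeaves leavesCount
        congr 1
        ext x
        simp
      rw [hPV, ← hl2]
      norm_num
    · have hPr : partLeaves T ({r} : Set V) = 1 := by
        unfold partLeaves
        have : {x : V | x ∈ ({r} : Set V) ∧ ∀ y, T x y → y ∉ ({r} : Set V)} = {r} := by
          ext x
          simp only [Set.mem_setOf_eq, Set.mem_singleton_iff]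
          constructor
          · exact fun h => h.1
          · rintro rfl
            exact ⟨rfl, fun y hy hyr => hT.1 _ (hyr ▸ hy)⟩
        rw [this, Set.ncard_singleton]
      rw [hPr, ← hl2]
      norm_num
  -- case lam ≥ 3
  · set q := (lam + 5) / 4 with hqdef
    have hq1 : lam + 2 ≤ 4 * q := by omega
    have hq2 : 4 * q ≤ lam + 5 := by omega
    have hq3 : 2 ≤ q := by omega
    have hqlam : q ≤ lam := by omega
    have hlr : lcnt T r = lam := by
      unfold lcnt
      have : desc T r = Set.univ := Set.eq_univ_of_forall fun u => hT.2.2 u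
      rw [this, Set.univ_inter, hLS, ← hlam]
      rfl
    -- minimal v
    set M : Set V := {v | q ≤ lcnt T v} with hMdef
    obtain ⟨v, hvM, hvmax⟩ := Set.Finite.exists_maximalFor (dep T r) M (Set.toFinite M)
      ⟨r, by rw [hMdef]; exact Set.mem_setOf_eq ▸ (hlr ▸ hqlam)⟩
    have hvq : q ≤ lcnt T v := hvM
    have hchild : ∀ c, T v c → lcnt T c < q := by
      intro c hc
      by_contra hge
      push_neg at hge
      have hcM : c ∈ M := hge
      have hd : dep T r c = dep T r v + 1 := dep_succ hT hc
      have := hvmax hcM (by omega)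
      omega
    -- v is not a leaf
    have hnl : ∃ c, T v c := by
      by_contra hno
      push_neg at hno
      have : desc T v = {v} := by
        ext u
        constructor
        · intro hu
          rcases hu.cases_head with rfl | ⟨c, hc, -⟩
          · rfl
          · exact absurd hc (hno c)
        · rintro rfl; exact self_mem_desc _
      have : lcnt T v ≤ 1 := by
        unfold lcnt
        calc (desc T v ∩ leafSet T).ncard ≤ ({v} : Set V).ncard :=
              Set.ncard_le_ncard (this ▸ Set.inter_subset_left) (Set.toFinite _)
          _ = 1 := Set.ncard_singleton v
      omega
    set C : Finset V := (Set.toFinite {c | T v c}).toFinset with hCdef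
    have hCmem : ∀ c, c ∈ C ↔ T v c := by
      intro c; rw [hCdef, Set.Finite.mem_toFinset]; rfl
    have hsumC : ∑ c ∈ C, lcnt T c = lcnt T v := by
      have hdesc : desc T v ∩ leafSet T = (⋃ c ∈ C, desc T c) ∩ leafSet T := by
        ext u
        simp only [Set.mem_inter_iff, Set.mem_iUnion]
        constructor
        · rintro ⟨hu, hleaf⟩
          refine ⟨?_, hleaf⟩
          rcases hu.cases_head with rfl | ⟨c, hc, hcu⟩
          · obtain ⟨c, hc⟩ := hnl
            exact absurd hc (hleaf c)
          · exact ⟨c, (hCmem c).2 hc, hcu⟩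
        · rintro ⟨⟨c, hc, hcu⟩, hleaf⟩
          exact ⟨ReflTransGen.head ((hCmem c).1 hc) hcu, hleaf⟩
      rw [← ncard_biUnion_leaf hT C (fun c hc => (hCmem c).1 hc)]
      unfold lcnt
      rw [hdesc]
    obtain ⟨S, hSC, hs1, hs2⟩ := greedy (q := q) (by omega) (lcnt T) C
      (fun c hc => by have := hchild c ((hCmem c).1 hc); omega) (by rw [hsumC]; exact hvq)
    have hSne : S.Nonempty := by
      rcases S.eq_empty_or_nonempty with rfl | h
      · simp only [Finset.sum_empty] at hs1; omega
      · exact h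
    set s := ∑ c ∈ S, lcnt T c with hsdef
    have hchildS : ∀ c ∈ S, T v c := fun c hc => (hCmem c).1 (hSC hc)
    set U : Set V := ⋃ c ∈ S, desc T c with hUdef
    have hvU : v ∉ U := by
      intro hv
      rw [hUdef] at hv
      simp only [Set.mem_iUnion] at hv
      obtain ⟨c, hc, hvc⟩ := hv
      exact not_mem_desc_child hT (hchildS c hc) hvc
    have hUncard : (U ∩ leafSet T).ncard = s := ncard_biUnion_leaf hT S hchildS
    refine ⟨v, insert v U, Uᶜ ∪ {v}, ?_, ?_, ?_, ?_, ?_⟩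
    · ext x
      by_cases hx : x ∈ U <;> simp [hx]
    · ext x
      simp only [Set.mem_inter_iff, Set.mem_insert_iff, Set.mem_union, Set.mem_compl_iff,
        Set.mem_singleton_iff]
      constructor
      · rintro ⟨h1 | h1, h2 | h2⟩ <;> tauto
      · rintro rfl; exact ⟨Or.inl rfl, Or.inr rfl⟩
    · intro a b hab ha hb
      simp only [Set.mem_insert_iff, ha, hb, false_or]
      constructor
      · intro haU
        rw [hUdef] at haU ⊢
        simp only [Set.mem_iUnion] at haU ⊢
        obtain ⟨c, hc, hac⟩ := haU
        exact ⟨c, hc, hac.tail hab⟩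
      · intro hbU
        rw [hUdef] at hbU ⊢
        simp only [Set.mem_iUnion] at hbU ⊢
        obtain ⟨c, hc, hbc⟩ := hbU
        have hbr : b ≠ r := fun h => hT.1 a (h ▸ hab)
        have hbne : b ≠ c := by
          rintro rfl
          exact ha ((hT.2.1 b hbr).unique hab (hchildS _ hc))
        exact ⟨c, hc, parent_mem_desc hT hbc hbne hab⟩
    -- partLeaves V' bounds
    · have hset : {x : V | x ∈ insert v U ∧ ∀ y, T x y → y ∉ insert v U} = U ∩ leafSet T := by
        ext x
        simp only [Set.mem_setOf_eq, Set.mem_inter_iff]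
        constructor
        · rintro ⟨hx1, hx2⟩
          have hxv : x ≠ v := by
            rintro rfl
            obtain ⟨c, hc⟩ := hSne
            have hcU : c ∈ U := by
              rw [hUdef]; simp only [Set.mem_iUnion]
              exact ⟨c, hc, self_mem_desc _⟩
            exact hx2 c (hchildS c hc) (Set.mem_insert_of_mem _ hcU)
          have hxU : x ∈ U := by
            rcases hx1 with h | h
            · exact absurd h hxv
            · exact h
          refine ⟨hxU, fun y hy => ?_⟩
          rw [hUdef] at hxU
          simp only [Set.mem_iUnion] at hxU
          obtain ⟨c, hc, hxc⟩ := hxU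
          have hyU : y ∈ U := by
            rw [hUdef]; simp only [Set.mem_iUnion]
            exact ⟨c, hc, hxc.tail hy⟩
          exact absurd (Set.mem_insert_of_mem v hyU) (hx2 y hy)
        · rintro ⟨hx1, hx2⟩
          exact ⟨Set.mem_insert_of_mem v hx1, fun y hy => absurd hy (hx2 y)⟩
      have hPV : partLeaves T (insert v U) = s := by
        unfold partLeaves
        rw [hset, hUncard]
      rw [hPV]
      rw [div_le_iff₀ (by norm_num), le_div_iff₀ (by norm_num)]
      have c1 : (lam : ℝ) + 2 ≤ 4 * q := by exact_mod_cast hq1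
      have c2 : (4 : ℝ) * q ≤ lam + 5 := by exact_mod_cast hq2
      have c3 : (q : ℝ) ≤ s := by exact_mod_cast hs1
      have c4 : (s : ℝ) + 2 ≤ 2 * q := by exact_mod_cast hs2
      constructor <;> linarith
    -- partLeaves V'' bounds
    · set A : Set V := leafSet T \ U with hAdef
      set P : Set V := {x : V | x ∈ Uᶜ ∪ {v} ∧ ∀ y, T x y → y ∉ Uᶜ ∪ {v}} with hPdef
      have hPeq : partLeaves T (Uᶜ ∪ {v}) = P.ncard := rfl
      have hAsub : A ⊆ P := by
        rintro x ⟨hxL, hxU⟩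
        exact ⟨Or.inl hxU, fun y hy => absurd hy (hxL y)⟩
      have hPsub : P ⊆ A ∪ {v} := by
        rintro x ⟨hx1, hx2⟩
        by_cases hxv : x = v
        · exact Or.inr hxv
        have hxU : x ∉ U := by
          rcases hx1 with h | h
          · exact h
          · exact absurd h hxv
        refine Or.inl ⟨fun y hy => ?_, hxU⟩
        by_contra h
        push_neg at h
        obtain hy := h
        have := hx2 y hy
        have hyU : y ∈ U ∧ y ≠ v := by
          by_contra hcon
          push_neg at hcon
          rcases Classical.em (y ∈ U) with hyy | hyy
          · exact this (Or.inr (Set.mem_singleton_iff.2 (hcon hyy)))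
          · exact this (Or.inl hyy)
        obtain ⟨hyU', hyv⟩ := hyU
        rw [hUdef] at hyU'
        simp only [Set.mem_iUnion] at hyU'
        obtain ⟨c, hc, hyc⟩ := hyU'
        have hyr : y ≠ r := fun hh => hT.1 x (hh ▸ hy)
        have hyne : y ≠ c := by
          rintro rfl
          exact hxv ((hT.2.1 y hyr).unique hy (hchildS _ hc))
        have : x ∈ desc T c := parent_mem_desc hT hyc hyne hy
        apply hxU
        rw [hUdef]; simp only [Set.mem_iUnion]
        exact ⟨c, hc, this⟩
      have hAcard : A.ncard + s = lam := by
        have hsplit : leafSet T = A ∪ (U ∩ leafSet T) := by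
          ext x
          by_cases hx : x ∈ U <;> simp [hAdef, hx]
        have hdisj : Disjoint A (U ∩ leafSet T) := by
          rw [Set.disjoint_left]
          rintro x ⟨-, hxU⟩ ⟨hxU', -⟩
          exact hxU hxU'
        have := Set.ncard_union_eq hdisj (Set.toFinite _) (Set.toFinite _)
        rw [← hsplit] at this
        rw [hUncard] at this
        rw [← this, hLS, ← hlam]
        rfl
      have ht1 : A.ncard ≤ P.ncard := Set.ncard_le_ncard hAsub (Set.toFinite _)
      have ht2 : P.ncard ≤ A.ncard + 1 := by
        calc P.ncard ≤ (A ∪ {v}).ncard := Set.ncard_le_ncard hPsub (Set.toFinite _)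
          _ ≤ A.ncard + ({v} : Set V).ncard := Set.ncard_union_le _ _
          _ = A.ncard + 1 := by rw [Set.ncard_singleton]
      rw [hPeq]
      rw [div_le_iff₀ (by norm_num), le_div_iff₀ (by norm_num)]
      have c1 : (lam : ℝ) + 2 ≤ 4 * q := by exact_mod_cast hq1
      have c2 : (4 : ℝ) * q ≤ lam + 5 := by exact_mod_cast hq2
      have c3 : (q : ℝ) ≤ s := by exact_mod_cast hs1
      have c4 : (s : ℝ) + 2 ≤ 2 * q := by exact_mod_cast hs2
      have c5 : (A.ncard : ℝ) + s = lam := by exact_mod_cast hAcard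
      have c6 : (A.ncard : ℝ) ≤ P.ncard := by exact_mod_cast ht1
      have c7 : (P.ncard : ℝ) ≤ A.ncard + 1 := by exact_mod_cast ht2
      constructor <;> linarith
end
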